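/- arXiv:1505.05922 — 5 statements merged into one kernel-verified Lean document; each statement's English description precedes it below -/
import Mathlib

section
/- Let A be a semilocal Dedekind domain with maximal ideals 𝔪₁,…,𝔪ᵣ, and let A' be the localization of the polynomial ring A[t] at the multiplicative set of all polynomials not contained in any of the prime ideals 𝔪ᵢ·A[t]. Then A' is again a semilocal Dedekind domain whose maximal ideals are exactly the ideals 𝔪₁A',…,𝔪ᵣA'; moreover, if s ∈ 𝔪₁⋯𝔪ᵣ, then s ∈ (𝔪₁A')⋯(𝔪ᵣA'). -/
open Polynomial

/-- In a domain with well-founded divisibility, a nonzero prime ideal contained in the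
principal ideal generated by a non-unit, nonzero element equals that principal ideal. -/
theorem aux_ht1 {R : Type*} [CommRing R] [IsDomain R] [WfDvdMonoid R]
    {p : R} (hp0 : p ≠ 0) (hpu : ¬ IsUnit p) {Q : Ideal R} (hQ : Q.IsPrime)
    (hne : Q ≠ ⊥) (hle : Q ≤ Ideal.span {p}) : Q = Ideal.span {p} := by
  by_cases hpQ : p ∈ Q
  · exact le_antisymm hle ((Ideal.span_singleton_le_iff_mem _).mpr hpQ)
  · exfalso
    obtain ⟨f, hfQ, hf0⟩ := Submodule.exists_mem_ne_zero_of_ne_bot hne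
    have descent : ∀ n : ℕ, ∃ g, g ∈ Q ∧ f = p ^ n * g := by
      intro n
      induction n with
      | zero => exact ⟨f, hfQ, by rw [pow_zero, one_mul]⟩
      | succ n ih =>
        obtain ⟨g, hgQ, hfg⟩ := ih
        obtain ⟨h, hh⟩ := Ideal.mem_span_singleton.mp (hle hgQ)
        have hhQ : h ∈ Q := (hQ.mem_or_mem (hh ▸ hgQ)).resolve_left hpQ
        exact ⟨h, hhQ, by rw [hfg, hh, pow_succ, mul_assoc]⟩
    obtain ⟨n, a, ha, hfa⟩ := WfDvdMonoid.max_power_factor' hf0 hpu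
    obtain ⟨g, hgQ, hfg⟩ := descent (n + 1)
    apply ha
    refine ⟨g, mul_left_cancel₀ (pow_ne_zero n hp0) ?_⟩
    rw [← hfa, hfg, pow_succ, mul_assoc]

theorem aux_map_prod {R S : Type*} [CommRing R] [CommRing S] (f : R →+* S)
    {ι : Type*} (t : Finset ι) (I : ι → Ideal R) :
    Ideal.map f (∏ i ∈ t, I i) ≤ ∏ i ∈ t, Ideal.map f (I i) := by
  classical
  induction t using Finset.induction with
  | empty => simp only [Finset.prod_empty, Ideal.one_eq_top]; exact le_top
  | insert _ _ h ih =>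
    rw [Finset.prod_insert h, Finset.prod_insert h, Ideal.map_mul]
    exact Ideal.mul_mono le_rfl ih

/-- Let `A` be a semilocal Dedekind domain with (finitely many) maximal
ideals `𝔪₁, …, 𝔪ᵣ` (collected in the finset `M`), and let `A'` be the localization of the
polynomial ring `A[t]` at the multiplicative set `S` of all polynomials not contained in any
of the prime ideals `𝔪ᵢ·A[t]`.  Then `A'` is again a semilocal Dedekind domain whose maximal
ideals are exactly `𝔪₁A', …, 𝔪ᵣA'`; moreover if `s ∈ 𝔪₁⋯𝔪ᵣ` then
`s ∈ (𝔪₁A')⋯(𝔪ᵣA')`. -/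
theorem stmt_2 {A : Type*} [CommRing A] [IsDedekindDomain A] (hA : ¬ IsField A)
    (M : Finset (Ideal A)) (hM : ∀ m : Ideal A, m ∈ M ↔ m.IsMaximal)
    (S : Submonoid (Polynomial A))
    (hS : (S : Set (Polynomial A)) =
      {f : Polynomial A | ∀ m ∈ M, f ∉ Ideal.map (C : A →+* Polynomial A) m})
    (A' : Type*) [CommRing A'] [Algebra (Polynomial A) A'] [IsLocalization S A'] :
    IsDedekindDomain A' ∧ ¬ IsField A' ∧
    (∀ P : Ideal A', P.IsMaximal ↔
      ∃ m ∈ M, P = Ideal.map (algebraMap (Polynomial A) A')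
        (Ideal.map (C : A →+* Polynomial A) m)) ∧
    (∀ s : A, s ∈ ∏ m ∈ M, m →
      algebraMap (Polynomial A) A' (C s) ∈
        ∏ m ∈ M, Ideal.map (algebraMap (Polynomial A) A')
          (Ideal.map (C : A →+* Polynomial A) m)) := by
  classical
  -- A is a PID
  haveI hPID : IsPrincipalIdealRing A := by
    refine IsPrincipalIdealRing.of_finite_primes ?_
    refine ((M.finite_toSet.insert ⊥)).subset ?_
    intro I hI
    rcases eq_or_ne I ⊥ with h | h
    · exact Set.mem_insert_iff.mpr (Or.inl h)
    · exact Set.mem_insert_iff.mpr (Or.inr ((hM I).mpr (hI.isMaximal h)))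
  -- M is nonempty
  obtain ⟨m₀, hm₀max⟩ := Ideal.exists_maximal A
  have hm₀ : m₀ ∈ M := (hM m₀).mpr hm₀max
  -- basic facts about m ∈ M
  have hprimeQ : ∀ m ∈ M, (Ideal.map (C : A →+* A[X]) m).IsPrime := fun m hm =>
    by haveI := ((hM m).mp hm).isPrime; exact Ideal.isPrime_map_C_of_isPrime
  have hdisj : ∀ m ∈ M, Disjoint (S : Set A[X]) ((Ideal.map (C : A →+* A[X]) m : Ideal A[X]) : Set A[X]) := by
    intro m hm
    refine Set.disjoint_left.mpr fun f hfS hfm => ?_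
    rw [hS] at hfS
    exact hfS m hm hfm
  have hcomapC : ∀ m : Ideal A, Ideal.comap (C : A →+* A[X]) (Ideal.map C m) = m := by
    intro m
    ext a
    simp only [Ideal.mem_comap, Ideal.mem_map_C_iff]
    constructor
    · intro h; simpa using h 0
    · intro ha n
      rcases eq_or_ne n 0 with rfl | hn
      · simpa using ha
      · simp [coeff_C, hn]
  have hMinj : ∀ m ∈ M, ∀ m' ∈ M,
      Ideal.map (C : A →+* A[X]) m ≤ Ideal.map (C : A →+* A[X]) m' → m = m' := by
    intro m hm m' hm' hle
    have : m ≤ m' := by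
      rw [← hcomapC m, ← hcomapC m']
      exact Ideal.comap_mono hle
    exact ((hM m).mp hm).eq_of_le ((hM m').mp hm').ne_top this
  -- every prime disjoint from S lies below some map C m
  have key : ∀ Q : Ideal A[X], Q.IsPrime → Disjoint (S : Set A[X]) (Q : Set A[X]) →
      ∃ m ∈ M, Q ≤ Ideal.map (C : A →+* A[X]) m := by
    intro Q _ hd
    have hsub : (Q : Set A[X]) ⊆ ⋃ m ∈ (M : Set (Ideal A)), ((Ideal.map (C : A →+* A[X]) m : Ideal A[X]) : Set A[X]) := by
      intro f hf
      have hfS : f ∉ (S : Set A[X]) := Set.disjoint_right.mp hd hf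
      rw [hS] at hfS
      simp only [Set.mem_setOf_eq] at hfS
      push_neg at hfS
      obtain ⟨m, hm, hfm⟩ := hfS
      exact Set.mem_biUnion hm hfm
    exact (Ideal.subset_union_prime ⊥ ⊥ fun m hm _ _ => hprimeQ m hm).mp hsub
  -- S consists of nonzerodivisors
  have hSle : S ≤ nonZeroDivisors A[X] := by
    intro f hf
    refine mem_nonZeroDivisors_of_ne_zero fun h0 => ?_
    have : f ∈ (S : Set A[X]) := hf
    rw [hS] at this
    exact this m₀ hm₀ (h0 ▸ Ideal.zero_mem _)
  -- instances on A'
  haveI : IsDomain A' := IsLocalization.isDomain_of_le_nonZeroDivisors A' hSle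
  haveI : IsNoetherianRing A' := IsLocalization.isNoetherianRing S A' inferInstance
  haveI : IsIntegrallyClosed A' := isIntegrallyClosed_of_isLocalization A' S hSle
  -- primes of A' coming from m ∈ M
  have hPmprime : ∀ m ∈ M,
      (Ideal.map (algebraMap A[X] A') (Ideal.map (C : A →+* A[X]) m)).IsPrime := fun m hm =>
    IsLocalization.isPrime_of_isPrime_disjoint S A' _ (hprimeQ m hm) (hdisj m hm)
  -- they are maximal
  have hPmmax : ∀ m ∈ M,
      (Ideal.map (algebraMap A[X] A') (Ideal.map (C : A →+* A[X]) m)).IsMaximal := by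
    intro m hm
    refine ⟨⟨(hPmprime m hm).ne_top, fun J hJ => ?_⟩⟩
    by_contra hJtop
    obtain ⟨P', hP'max, hJP'⟩ := Ideal.exists_le_maximal J hJtop
    have hP'prime : P'.IsPrime := hP'max.isPrime
    obtain ⟨hcp, hcd⟩ := (IsLocalization.isPrime_iff_isPrime_disjoint S A' P').mp hP'prime
    obtain ⟨m', hm', hle'⟩ := key _ hcp hcd
    have h1 : Ideal.map (C : A →+* A[X]) m ≤ Ideal.comap (algebraMap A[X] A') P' :=
      Ideal.map_le_iff_le_comap.mp (le_trans hJ.le hJP')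
    have hmm : m = m' := hMinj m hm m' hm' (h1.trans hle')
    subst hmm
    have hP'eq : P' = Ideal.map (algebraMap A[X] A') (Ideal.map (C : A →+* A[X]) m) := by
      conv_lhs => rw [← IsLocalization.map_comap S A' P']
      rw [le_antisymm hle' h1]
    exact absurd (hJP'.trans_eq hP'eq) (not_le_of_gt hJ)
  -- classification of maximal ideals
  have hclass : ∀ P : Ideal A', P.IsMaximal ↔
      ∃ m ∈ M, P = Ideal.map (algebraMap (Polynomial A) A')
        (Ideal.map (C : A →+* Polynomial A) m) := by
    intro P
    constructor
    · intro hPmax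
      have hPprime : P.IsPrime := hPmax.isPrime
      obtain ⟨hcp, hcd⟩ := (IsLocalization.isPrime_iff_isPrime_disjoint S A' P).mp hPprime
      obtain ⟨m, hm, hle'⟩ := key _ hcp hcd
      refine ⟨m, hm, ?_⟩
      have h2 : P ≤ Ideal.map (algebraMap A[X] A') (Ideal.map (C : A →+* A[X]) m) := by
        conv_lhs => rw [← IsLocalization.map_comap S A' P]
        exact Ideal.map_mono hle'
      exact (hPmax.eq_of_le (hPmprime m hm).ne_top h2)
    · rintro ⟨m, hm, rfl⟩
      exact hPmmax m hm
  -- dimension ≤ 1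
  haveI hdim : Ring.DimensionLEOne A' := by
    refine ⟨fun {P} hPne hPprime => ?_⟩
    obtain ⟨hcp, hcd⟩ := (IsLocalization.isPrime_iff_isPrime_disjoint S A' P).mp hPprime
    obtain ⟨m, hm, hle'⟩ := key _ hcp hcd
    -- the comap is nonzero
    have hQne : Ideal.comap (algebraMap A[X] A') P ≠ ⊥ := by
      intro h
      apply hPne
      rw [← IsLocalization.map_comap S A' P, Ideal.under_def, h, Ideal.map_bot]
    -- m is principal
    obtain ⟨p, hp⟩ := (IsPrincipalIdealRing.principal m).principal
    rw [Ideal.submodule_span_eq] at hp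
    have hmbot : m ≠ ⊥ := by
      haveI := (hM m).mp hm
      exact (Ideal.bot_lt_of_maximal m hA).ne'
    have hp0 : p ≠ 0 := by
      rintro rfl
      exact hmbot (by simp [hp])
    have hpu : ¬ IsUnit p := by
      intro h
      exact ((hM m).mp hm).ne_top (hp.trans (Ideal.span_singleton_eq_top.mpr h))
    have hmapspan : Ideal.map (C : A →+* A[X]) m = Ideal.span {C p} := by
      rw [hp, Ideal.map_span, Set.image_singleton]
    have hCp0 : (C p : A[X]) ≠ 0 := fun h => hp0 (by simpa using h)
    have hCpu : ¬ IsUnit (C p : A[X]) := fun h => hpu (Polynomial.isUnit_C.mp h)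
    have hQeq : Ideal.comap (algebraMap A[X] A') P = Ideal.map (C : A →+* A[X]) m := by
      rw [hmapspan]
      exact aux_ht1 hCp0 hCpu hcp hQne (hmapspan ▸ hle')
    have : P = Ideal.map (algebraMap A[X] A') (Ideal.map (C : A →+* A[X]) m) := by
      conv_lhs => rw [← IsLocalization.map_comap S A' P]
      rw [Ideal.under_def, hQeq]
    exact this ▸ hPmmax m hm
  haveI : IsDedekindRing A' := { }
  refine ⟨inferInstance, ?_, hclass, ?_⟩
  · -- not a field
    refine Ring.not_isField_iff_exists_prime.mpr
      ⟨Ideal.map (algebraMap A[X] A') (Ideal.map (C : A →+* A[X]) m₀), ?_, hPmprime m₀ hm₀⟩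
    -- nonzero: contains the image of C p₀ ≠ 0
    obtain ⟨p, hp⟩ := (IsPrincipalIdealRing.principal m₀).principal
    rw [Ideal.submodule_span_eq] at hp
    have hmbot : m₀ ≠ ⊥ := (Ideal.bot_lt_of_maximal m₀ hA).ne'
    have hp0 : p ≠ 0 := by
      rintro rfl
      exact hmbot (by simp [hp])
    intro hbot
    have hmem : algebraMap A[X] A' (C p) ∈
        Ideal.map (algebraMap A[X] A') (Ideal.map (C : A →+* A[X]) m₀) :=
      Ideal.mem_map_of_mem _ (Ideal.mem_map_of_mem _ (hp ▸ Ideal.mem_span_singleton_self p))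
    rw [hbot] at hmem
    have : (C p : A[X]) = 0 := by
      have hinj : Function.Injective (algebraMap A[X] A') := IsLocalization.injective A' hSle
      exact hinj (by simpa using hmem)
    exact hp0 (by simpa using this)
  · -- the product statement
    intro s hs
    have h1 : (C s : A[X]) ∈ Ideal.map (C : A →+* A[X]) (∏ m ∈ M, m) :=
      Ideal.mem_map_of_mem _ hs
    have h2 : algebraMap A[X] A' (C s) ∈
        Ideal.map (algebraMap A[X] A') (Ideal.map (C : A →+* A[X]) (∏ m ∈ M, m)) :=
      Ideal.mem_map_of_mem _ h1
    rw [Ideal.map_map (C : A →+* A[X]) (algebraMap A[X] A')] at h2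
    have h3 := aux_map_prod ((algebraMap A[X] A').comp (C : A →+* A[X])) M id
    simp only [id] at h3
    have h4 : (∏ m ∈ M, Ideal.map (algebraMap (Polynomial A) A')
        (Ideal.map (C : A →+* Polynomial A) m)) =
        ∏ m ∈ M, Ideal.map ((algebraMap A[X] A').comp (C : A →+* A[X])) m :=
      Finset.prod_congr rfl fun m _ =>
        Ideal.map_map (I := m) (C : A →+* A[X]) (algebraMap A[X] A')
    rw [h4]
    exact h3 h2
end

section
/- Let A be a semilocal Dedekind domain with maximal ideals 𝔪₁,…,𝔪ᵣ, s ∈ 𝔪₁⋯𝔪ᵣ nonzero, and n ≥ 2. For j ∈ {1,…,n}, let A^(j) be the localization of A[tⱼ] at the multiplicative set of polynomials lying in no 𝔪ᵢ·A[tⱼ], and let ι_j(f) denote a nonzero polynomial f ∈ A[t₁,…,tₙ] regarded as a polynomial in the n−1 variables t₁,…,t̂ⱼ,…,tₙ (tⱼ omitted) with coefficients in A^(j). Then f satisfies conditions (Q1) and (Q2) over (A, s) if and only if for every j ∈ {1,…,n} the polynomial ι_j(f) satisfies conditions (Q1) and (Q2) over (A^(j), s). -/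
open MvPolynomial

/-- The multi-index `(N₁, …, Nₙ)` of the top coefficient of `f`, where
`Nⱼ = deg_{tⱼ} f`. -/
noncomputable def topDeg {A : Type*} [CommSemiring A] {σ : Type*} [Fintype σ]
    (f : MvPolynomial σ A) : σ →₀ ℕ :=
  Finsupp.equivFunOnFinite.symm fun j => degreeOf j f

/-- Conditions (Q1) and (Q2) for a polynomial `f ∈ A[t₁,…,tₙ]` relative to `s ∈ A`:
(Q1) every coefficient `a_{i₁…iₙ}` lies in `s^{maxⱼ (Nⱼ−iⱼ)}·A`, and
(Q2) the top coefficient `a_{N₁…Nₙ}` is a unit. -/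
def Q12 {A : Type*} [CommRing A] {σ : Type*} [Fintype σ] (s : A)
    (f : MvPolynomial σ A) : Prop :=
  (∀ d : σ →₀ ℕ, s ^ (Finset.univ.sup fun j => degreeOf j f - d j) ∣ coeff d f) ∧
  IsUnit (coeff (topDeg f) f)

/-- The polynomial `ι_j(f)`: `f ∈ A[t₁,…,tₙ]` regarded as a polynomial in the variables
`t₁, …, t̂ⱼ, …, tₙ` with coefficients in the localization `A⁽ʲ⁾` of `A[tⱼ]`. -/
noncomputable def iota {A : Type*} [CommRing A] (S : Submonoid (Polynomial A))
    {n : ℕ} (j : Fin n) (f : MvPolynomial (Fin n) A) :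
    MvPolynomial {i : Fin n // i ≠ j} (Localization S) :=
  MvPolynomial.eval₂
    ((MvPolynomial.C).comp ((algebraMap (Polynomial A) (Localization S)).comp Polynomial.C))
    (fun i => if h : i = j then
        MvPolynomial.C (algebraMap (Polynomial A) (Localization S) Polynomial.X)
      else MvPolynomial.X ⟨i, h⟩) f

section Aux

variable {A : Type*} [CommRing A] {n : ℕ}

/-- Extend a multi-index on `{i // i ≠ j}` by value `k` at `j`. -/
noncomputable def extIdx (j : Fin n) (d : {i : Fin n // i ≠ j} →₀ ℕ) (k : ℕ) : Fin n →₀ ℕ :=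
  Finsupp.equivFunOnFinite.symm fun i => if h : i = j then k else d ⟨i, h⟩

/-- Restrict a multi-index on `Fin n` to `{i // i ≠ j}`. -/
noncomputable def resIdx (j : Fin n) (m : Fin n →₀ ℕ) : {i : Fin n // i ≠ j} →₀ ℕ :=
  Finsupp.equivFunOnFinite.symm fun i => m i.val

@[simp] theorem extIdx_apply (j : Fin n) (d : {i : Fin n // i ≠ j} →₀ ℕ) (k : ℕ) (i : Fin n) :
    extIdx j d k i = if h : i = j then k else d ⟨i, h⟩ := by
  simp [extIdx]

@[simp] theorem resIdx_apply (j : Fin n) (m : Fin n →₀ ℕ) (i : {i : Fin n // i ≠ j}) :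
    resIdx j m i = m i.val := by
  simp [resIdx]

@[simp] theorem extIdx_self (j : Fin n) (d : {i : Fin n // i ≠ j} →₀ ℕ) (k : ℕ) :
    extIdx j d k j = k := by simp

theorem extIdx_ne (j : Fin n) (d : {i : Fin n // i ≠ j} →₀ ℕ) (k : ℕ) (i : {i : Fin n // i ≠ j}) :
    extIdx j d k i.val = d i := by
  simp [i.2]

@[simp] theorem resIdx_extIdx (j : Fin n) (d : {i : Fin n // i ≠ j} →₀ ℕ) (k : ℕ) :
    resIdx j (extIdx j d k) = d := by
  ext i; simp [i.2]

@[simp] theorem extIdx_resIdx (j : Fin n) (m : Fin n →₀ ℕ) :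
    extIdx j (resIdx j m) (m j) = m := by
  ext i
  by_cases h : i = j <;> simp [h]

theorem extIdx_eq_iff (j : Fin n) (d : {i : Fin n // i ≠ j} →₀ ℕ) (k : ℕ) (m : Fin n →₀ ℕ) :
    m = extIdx j d k ↔ resIdx j m = d ∧ m j = k := by
  constructor
  · rintro rfl; simp
  · rintro ⟨rfl, rfl⟩; simp

theorem iota_monomial {A : Type*} [CommRing A] (S : Submonoid (Polynomial A))
    (j : Fin n) (m : Fin n →₀ ℕ) (a : A) :
    iota S j (monomial m a) =
      monomial (resIdx j m) (algebraMap (Polynomial A) (Localization S)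
        (Polynomial.monomial (m j) a)) := by
  rw [iota, eval₂_monomial, monomial_eq,
    Finsupp.prod_fintype _ _ (fun i => pow_zero _), Finsupp.prod_fintype _ _ (fun i => pow_zero _)]
  set alg := algebraMap (Polynomial A) (Localization S) with halg
  set F : Fin n → MvPolynomial {i : Fin n // i ≠ j} (Localization S) :=
    fun i => if h : i = j then 1 else MvPolynomial.X ⟨i, h⟩ ^ m i with hF
  have hL : (∏ i : Fin n,
      (if h : i = j then MvPolynomial.C (alg Polynomial.X)
        else MvPolynomial.X (⟨i, h⟩ : {i : Fin n // i ≠ j})) ^ m i)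
      = MvPolynomial.C (alg Polynomial.X) ^ m j * ∏ i ∈ Finset.univ.erase j, F i := by
    rw [← Finset.mul_prod_erase Finset.univ _ (Finset.mem_univ j), dif_pos rfl]
    congr 1
    refine Finset.prod_congr rfl fun i hi => ?_
    have hij : i ≠ j := (Finset.mem_erase.mp hi).1
    rw [dif_neg hij, hF]
    simp [hij]
  have hR : (∏ i : {i : Fin n // i ≠ j}, MvPolynomial.X i ^ (resIdx j m) i)
      = ∏ i ∈ Finset.univ.erase j, F i := by
    rw [Finset.prod_subtype (p := fun i => i ≠ j) (Finset.univ.erase j)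
      (fun x => by simp [Finset.mem_erase]) F]
    refine Finset.prod_congr rfl fun i _ => ?_
    rw [hF]
    simp only [resIdx_apply]
    rw [dif_neg i.2]
  rw [hL, hR, ← Polynomial.C_mul_X_pow_eq_monomial, map_mul, map_mul, map_pow, map_pow]
  simp only [RingHom.coe_comp, Function.comp_apply]
  ring

theorem iota_coeff {A : Type*} [CommRing A] (S : Submonoid (Polynomial A))
    (j : Fin n) (f : MvPolynomial (Fin n) A) (d : {i : Fin n // i ≠ j} →₀ ℕ) :
    ∃ p : Polynomial A,
      MvPolynomial.coeff d (iota S j f) = algebraMap (Polynomial A) (Localization S) p ∧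
      ∀ k, p.coeff k = MvPolynomial.coeff (extIdx j d k) f := by
  induction f using MvPolynomial.induction_on' with
  | add f g hf hg =>
    obtain ⟨p, hp1, hp2⟩ := hf
    obtain ⟨q, hq1, hq2⟩ := hg
    refine ⟨p + q, ?_, ?_⟩
    · rw [iota, eval₂_add, ← iota, ← iota, map_add, coeff_add, hp1, hq1]
    · intro k
      rw [Polynomial.coeff_add, hp2, hq2, coeff_add]
  | monomial m a =>
    refine ⟨if resIdx j m = d then Polynomial.monomial (m j) a else 0, ?_, ?_⟩
    · rw [iota_monomial, coeff_monomial]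
      split <;> simp
    · intro k
      rw [coeff_monomial]
      by_cases h : resIdx j m = d
      · rw [if_pos h, Polynomial.coeff_monomial]
        by_cases hk : m j = k
        · rw [if_pos hk, if_pos]
          rw [extIdx_eq_iff]
          exact ⟨h, hk⟩
        · rw [if_neg hk, if_neg]
          rw [extIdx_eq_iff]
          tauto
      · rw [if_neg h, Polynomial.coeff_zero, if_neg]
        rw [extIdx_eq_iff]
        tauto

theorem key_dvd {A : Type*} [CommRing A] [IsDomain A] [UniqueFactorizationMonoid A]
    [Ring.DimensionLEOne A] {u : Polynomial A}
    (hu : ∀ m : Ideal A, m.IsMaximal → u ∉ Ideal.map (Polynomial.C : A →+* Polynomial A) m)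
    (b : A) : ∀ p : Polynomial A, Polynomial.C b ∣ u * p → Polynomial.C b ∣ p := by
  have hu0 : u ≠ 0 := by
    rintro rfl
    obtain ⟨m, hm⟩ := Ideal.exists_maximal A
    exact hu m hm (Submodule.zero_mem _)
  induction b using UniqueFactorizationMonoid.induction_on_prime with
  | h₁ =>
    intro p hp
    rw [map_zero, zero_dvd_iff] at hp ⊢
    exact (mul_eq_zero.mp hp).resolve_left hu0
  | h₂ x hx => exact fun p _ => (hx.map Polynomial.C).dvd
  | h₃ a π ha hπ ih =>
    intro p hp
    have hmax : (Ideal.span {π} : Ideal A).IsMaximal :=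
      Ideal.IsPrime.isMaximal ((Ideal.span_singleton_prime hπ.ne_zero).mpr hπ)
        (by rw [Ne, Ideal.span_singleton_eq_bot]; exact hπ.ne_zero)
    have hprime : (Ideal.map (Polynomial.C : A →+* Polynomial A) (Ideal.span {π})).IsPrime :=
      by haveI := hmax.isPrime; exact Ideal.isPrime_map_C_of_isPrime
    have hup : u * p ∈ Ideal.map (Polynomial.C : A →+* Polynomial A) (Ideal.span {π}) := by
      rw [Ideal.mem_map_C_iff]
      intro k
      rw [Ideal.mem_span_singleton]
      have hd : Polynomial.C π ∣ u * p := by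
        refine dvd_trans ?_ hp
        rw [map_mul]
        exact Dvd.intro _ rfl
      exact (Polynomial.C_dvd_iff_dvd_coeff _ _).mp hd k
    have hpmem : p ∈ Ideal.map (Polynomial.C : A →+* Polynomial A) (Ideal.span {π}) :=
      (hprime.mem_or_mem hup).resolve_left (hu _ hmax)
    have hCp : Polynomial.C π ∣ p :=
      (Polynomial.C_dvd_iff_dvd_coeff _ _).mpr fun k =>
        Ideal.mem_span_singleton.mp ((Ideal.mem_map_C_iff).mp hpmem k)
    obtain ⟨q, rfl⟩ := hCp
    have hπ0 : (Polynomial.C π : Polynomial A) ≠ 0 := by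
      simpa using hπ.ne_zero
    rw [map_mul]
    refine mul_dvd_mul_left _ (ih q ?_)
    have h2 : Polynomial.C π * Polynomial.C a ∣ Polynomial.C π * (u * q) := by
      rw [← map_mul]
      calc Polynomial.C (π * a) ∣ u * (Polynomial.C π * q) := hp
        _ = Polynomial.C π * (u * q) := by ring
    exact (mul_dvd_mul_iff_left hπ0).mp h2

theorem alg_dvd_iff {R : Type*} [CommRing R] (M : Submonoid R) (x y : R) :
    algebraMap R (Localization M) x ∣ algebraMap R (Localization M) y ↔
      ∃ u ∈ M, x ∣ u * y := by
  constructor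
  · rintro ⟨w, hw⟩
    obtain ⟨⟨z, u⟩, rfl⟩ := IsLocalization.mk'_surjective M w
    have h1 : algebraMap R (Localization M) (y * u) = algebraMap R (Localization M) (x * z) := by
      rw [map_mul, map_mul, hw, mul_assoc, IsLocalization.mk'_spec]
    obtain ⟨c, hc⟩ := (IsLocalization.eq_iff_exists M (Localization M)).mp h1
    refine ⟨c * u, mul_mem c.2 u.2, z * c, ?_⟩
    calc (c : R) * u * y = c * (y * u) := by ring
      _ = c * (x * z) := hc
      _ = x * (z * c) := by ring
  · rintro ⟨u, hu, z, hz⟩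
    have hunit : IsUnit (algebraMap R (Localization M) u) :=
      IsLocalization.map_units (Localization M) ⟨u, hu⟩
    refine (hunit.dvd_mul_left).mp ?_
    rw [← map_mul, hz, map_mul]
    exact Dvd.intro _ rfl

end Aux

/-- Let `A` be a semilocal Dedekind domain, `s ≠ 0` an element of all
maximal ideals, `n ≥ 2`, and for `j ∈ {1,…,n}` let `A⁽ʲ⁾` be the localization of `A[tⱼ]`
at the polynomials lying in no `𝔪ᵢ·A[tⱼ]`.  A nonzero `f ∈ A[t₁,…,tₙ]` satisfies (Q1) and
(Q2) over `(A, s)` iff for every `j` the polynomial `ι_j(f)` satisfies (Q1) and (Q2) over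
`(A⁽ʲ⁾, s)`. -/
theorem stmt_3 {A : Type*} [CommRing A] [IsDedekindDomain A] (hA : ¬ IsField A)
    (hfin : {I : Ideal A | I.IsMaximal}.Finite)
    (s : A) (hs0 : s ≠ 0) (hs : ∀ m : Ideal A, m.IsMaximal → s ∈ m)
    (S : Submonoid (Polynomial A))
    (hS : (S : Set (Polynomial A)) =
      {f : Polynomial A | ∀ m : Ideal A, m.IsMaximal →
        f ∉ Ideal.map (Polynomial.C : A →+* Polynomial A) m})
    {n : ℕ} (hn : 2 ≤ n) (f : MvPolynomial (Fin n) A) (hf : f ≠ 0) :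
    Q12 s f ↔ ∀ j : Fin n,
      Q12 (algebraMap (Polynomial A) (Localization S) (Polynomial.C s)) (iota S j f) := by
  classical
  haveI : IsPrincipalIdealRing A := by
    refine IsPrincipalIdealRing.of_finite_primes ?_
    refine Set.Finite.subset (hfin.union (Set.finite_singleton ⊥)) ?_
    rintro I hI
    by_cases hI0 : I = ⊥
    · exact Or.inr hI0
    · exact Or.inl (hI.isMaximal hI0)
  haveI : Nontrivial (Fin n) := Fin.nontrivial_iff_two_le.mpr hn
  have hSmem : ∀ p : Polynomial A, p ∈ S ↔ ∀ m : Ideal A, m.IsMaximal →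
      p ∉ Ideal.map (Polynomial.C : A →+* Polynomial A) m := by
    intro p
    rw [← SetLike.mem_coe, hS]
    rfl
  have hS0 : (0 : Polynomial A) ∉ S := by
    obtain ⟨m, hm⟩ := Ideal.exists_maximal A
    intro h0
    exact (hSmem 0).mp h0 m hm (Submodule.zero_mem _)
  have hinj : Function.Injective (algebraMap (Polynomial A) (Localization S)) :=
    IsLocalization.injective _ (le_nonZeroDivisors_of_noZeroDivisors hS0)
  have hsat : ∀ p q : Polynomial A, p * q ∈ S → p ∈ S := by
    intro p q hpq
    rw [hSmem] at hpq ⊢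
    intro m hm hp
    exact hpq m hm (Ideal.mul_mem_right _ _ hp)
  have halgunit : ∀ p : Polynomial A,
      IsUnit (algebraMap (Polynomial A) (Localization S) p) ↔ p ∈ S := by
    intro p
    constructor
    · intro h
      have h1 : algebraMap (Polynomial A) (Localization S) p ∣
          algebraMap (Polynomial A) (Localization S) 1 := by
        simpa using h.dvd
      obtain ⟨u, hu, q, hq⟩ := (alg_dvd_iff S p 1).mp h1
      rw [mul_one] at hq
      exact hsat p q (hq ▸ hu)
    · exact fun h => IsLocalization.map_units (Localization S) ⟨p, h⟩
  have hdeg : ∀ (j : Fin n) (i : {i : Fin n // i ≠ j}),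
      degreeOf i (iota S j f) = degreeOf i.val f := by
    intro j i
    refine le_antisymm ?_ ?_
    · rw [degreeOf_le_iff]
      intro d hd
      rw [mem_support_iff] at hd
      obtain ⟨p, hp1, hp2⟩ := iota_coeff S j f d
      have hp0 : p ≠ 0 := by
        rintro rfl
        rw [map_zero] at hp1
        exact hd hp1
      obtain ⟨k, hk⟩ : ∃ k, p.coeff k ≠ 0 := by
        by_contra hc
        push_neg at hc
        exact hp0 (Polynomial.ext_iff.mpr (by simpa using hc))
      rw [hp2] at hk
      have hmem := mem_support_iff.mpr hk
      have := degreeOf_le_iff.mp (le_refl (degreeOf i.val f)) _ hmem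
      rwa [extIdx_ne] at this
    · rw [degreeOf_le_iff]
      intro m hm
      obtain ⟨p, hp1, hp2⟩ := iota_coeff S j f (resIdx j m)
      have hpc : p.coeff (m j) ≠ 0 := by
        rw [hp2, extIdx_resIdx]
        exact mem_support_iff.mp hm
      have hp0 : p ≠ 0 := by
        rintro rfl
        simp at hpc
      have hc0 : coeff (resIdx j m) (iota S j f) ≠ 0 := by
        rw [hp1]
        intro hc
        exact hp0 (hinj (by rw [hc, map_zero]))
      have := degreeOf_le_iff.mp (le_refl (degreeOf i (iota S j f))) _ (mem_support_iff.mpr hc0)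
      simpa using this
  have htop : ∀ j : Fin n, topDeg (iota S j f) = resIdx j (topDeg f) := by
    intro j
    ext i
    simp [topDeg, hdeg j i]
  constructor
  · rintro ⟨hQ1, hQ2⟩ j
    constructor
    · intro d
      obtain ⟨p, hp1, hp2⟩ := iota_coeff S j f d
      rw [hp1, ← map_pow, ← map_pow]
      refine map_dvd _ ?_
      rw [Polynomial.C_dvd_iff_dvd_coeff]
      intro k
      rw [hp2]
      refine dvd_trans (pow_dvd_pow s ?_) (hQ1 (extIdx j d k))
      refine Finset.sup_le ?_
      intro i _
      rw [hdeg j i]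
      have h1 : degreeOf i.val f - d i = degreeOf i.val f - (extIdx j d k) i.val := by
        rw [extIdx_ne]
      rw [h1]
      exact Finset.le_sup (f := fun i' => degreeOf i' f - (extIdx j d k) i')
        (Finset.mem_univ i.val)
    · rw [htop j]
      obtain ⟨p, hp1, hp2⟩ := iota_coeff S j f (resIdx j (topDeg f))
      rw [hp1, halgunit, hSmem]
      intro m hm hmem
      have h1 : p.coeff (topDeg f j) ∈ m := Ideal.mem_map_C_iff.mp hmem _
      rw [hp2, extIdx_resIdx] at h1
      exact hm.ne_top (Ideal.eq_top_of_isUnit_mem m h1 hQ2)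
  · intro h
    have hQ1 : ∀ m : Fin n →₀ ℕ,
        s ^ (Finset.univ.sup fun i => degreeOf i f - m i) ∣ coeff m f := by
      intro m
      obtain ⟨i₀, -, hi₀⟩ := Finset.exists_mem_eq_sup Finset.univ Finset.univ_nonempty
        (fun i : Fin n => degreeOf i f - m i)
      obtain ⟨j, hj⟩ := exists_ne i₀
      obtain ⟨p, hp1, hp2⟩ := iota_coeff S j f (resIdx j m)
      have hq1 := (h j).1 (resIdx j m)
      rw [hp1, ← map_pow, ← map_pow] at hq1
      obtain ⟨u, hu, hdvd⟩ := (alg_dvd_iff S _ _).mp hq1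
      have hCdvd := key_dvd ((hSmem u).mp hu) _ p hdvd
      have h2 := (Polynomial.C_dvd_iff_dvd_coeff _ _).mp hCdvd (m j)
      rw [hp2, extIdx_resIdx] at h2
      refine dvd_trans (pow_dvd_pow s ?_) h2
      rw [hi₀]
      have h3 : degreeOf i₀ f - m i₀ =
          degreeOf (⟨i₀, Ne.symm hj⟩ : {i : Fin n // i ≠ j}) (iota S j f)
            - (resIdx j m) ⟨i₀, Ne.symm hj⟩ := by
        rw [hdeg]
        simp
      rw [h3]
      exact Finset.le_sup
        (f := fun i' : {i : Fin n // i ≠ j} => degreeOf i' (iota S j f) - (resIdx j m) i')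
        (Finset.mem_univ _)
    refine ⟨hQ1, ?_⟩
    by_contra hne
    obtain ⟨m, hm, hmem⟩ := exists_max_ideal_of_mem_nonunits (mem_nonunits_iff.mpr hne)
    set j : Fin n := ⟨0, by omega⟩ with hjdef
    have hq2 := (h j).2
    rw [htop j] at hq2
    obtain ⟨p, hp1, hp2⟩ := iota_coeff S j f (resIdx j (topDeg f))
    rw [hp1, halgunit, hSmem] at hq2
    have hnot := hq2 m hm
    rw [Ideal.mem_map_C_iff] at hnot
    push_neg at hnot
    obtain ⟨k, hk⟩ := hnot
    rw [hp2] at hk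
    have hTj : topDeg f j = degreeOf j f := by simp [topDeg]
    by_cases hkT : k = topDeg f j
    · rw [hkT, extIdx_resIdx] at hk
      exact hk hmem
    · have hklt : k < topDeg f j := by
        rcases lt_or_gt_of_ne hkT with h1 | h1
        · exact h1
        · exfalso
          have hc0 : coeff (extIdx j (resIdx j (topDeg f)) k) f = 0 := by
            by_contra hc
            have := degreeOf_le_iff.mp (le_refl (degreeOf j f)) _ (mem_support_iff.mpr hc)
            rw [extIdx_self] at this
            omega
          exact hk (hc0 ▸ Submodule.zero_mem m)
      have h1 : 1 ≤ Finset.univ.sup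
          fun i => degreeOf i f - (extIdx j (resIdx j (topDeg f)) k) i := by
        refine le_trans ?_ (Finset.le_sup (Finset.mem_univ j))
        rw [extIdx_self]
        omega
      have h3 : s ∣ coeff (extIdx j (resIdx j (topDeg f)) k) f :=
        dvd_trans (by simpa using pow_dvd_pow s h1) (hQ1 _)
      obtain ⟨c, hc⟩ := h3
      exact hk (hc ▸ Ideal.mul_mem_right _ m (hs m hm))
end

section
/- Let A be a semilocal Dedekind domain with maximal ideals 𝔪₁,…,𝔪ᵣ and let s ∈ 𝔪₁⋯𝔪ᵣ be nonzero. Let f ∈ A[t] be a nonzero polynomial of degree N with coefficients a₀,…,a_N. Then the following are equivalent: (a) aᵢ ∈ s^{N−i}·A for all 0 ≤ i ≤ N, and the leading coefficient a_N is a unit of A; (b) there exist an integer M ≥ 0 and polynomials h, g₁,…,g_M ∈ A[t] such that f·h = t^M + s·t^{M−1}·g₁ + s²·t^{M−2}·g₂ + ⋯ + s^M·g_M, and the leading coefficient a_N is a unit of A. (This is the one-variable case of Lemma 5.5, the base case of its induction.) -/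
open Polynomial

lemma coeff_comp_C_mul_X {R : Type*} [CommRing R] (p : R[X]) (s : R) (n : ℕ) :
    (p.comp (C s * X)).coeff n = p.coeff n * s ^ n := by
  induction p using Polynomial.induction_on' with
  | add p q hp hq => simp [add_comp, hp, hq, add_mul]
  | monomial k a =>
      simp only [monomial_comp, coeff_monomial, mul_pow, ← C_pow, ← mul_assoc, ← C_mul,
        coeff_C_mul, coeff_X_pow]
      split_ifs <;> simp_all

open IsLocalRing in
lemma stmt4_core {R : Type*} [CommRing R] [IsDomain R] [IsDiscreteValuationRing R]
    (s : R) (hs0 : s ≠ 0) (hsm : s ∈ maximalIdeal R)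
    (f h : R[X]) (hu : IsUnit f.leadingCoeff) (M : ℕ) (g : ℕ → R[X])
    (heq : f * h = X ^ M + ∑ i ∈ Finset.Icc 1 M, C (s ^ i) * X ^ (M - i) * g i) :
    ∀ i ≤ f.natDegree, s ^ (f.natDegree - i) ∣ f.coeff i := by
  classical
  letI : StrongNormalizationMonoid R := UniqueFactorizationMonoid.normalizationMonoid
  letI : StrongNormalizedGCDMonoid R := UniqueFactorizationMonoid.toStrongNormalizedGCDMonoid R
  set N := f.natDegree with hN
  set φ := residue R with hφ
  have hres : ∀ x : R, φ x = 0 ↔ x ∈ maximalIdeal R := fun x => Ideal.Quotient.eq_zero_iff_mem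
  have hφs : φ s = 0 := (hres s).mpr hsm
  have hf0 : f ≠ 0 := fun h0 => by simp [h0] at hu
  -- Step A : `f.coeff i ∈ 𝔪` for `i ≠ N`
  have hmapfh : f.map φ * h.map φ = X ^ M := by
    rw [← Polynomial.map_mul, heq, Polynomial.map_add, Polynomial.map_pow, Polynomial.map_X,
      Polynomial.map_sum]
    have hz : ∀ i ∈ Finset.Icc 1 M, ((C (s ^ i) * X ^ (M - i) * g i).map φ) = 0 := by
      intro i hi
      obtain ⟨h1, -⟩ := Finset.mem_Icc.mp hi
      rw [Polynomial.map_mul, Polynomial.map_mul, map_C, map_pow, hφs,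
        zero_pow (by omega), map_zero, zero_mul, zero_mul]
    rw [Finset.sum_congr rfl hz, Finset.sum_const_zero, add_zero]
  have hlead : φ f.leadingCoeff ≠ 0 := (hu.map φ).ne_zero
  have hmf0 : f.map φ ≠ 0 := fun h0 => hlead (by rw [leadingCoeff, ← coeff_map, h0, coeff_zero])
  have hND : (f.map φ).natDegree = N := natDegree_map_of_leadingCoeff_ne_zero φ hlead
  obtain ⟨j, hjM, u, hu2⟩ := (dvd_prime_pow prime_X M).mp ⟨h.map φ, hmapfh.symm⟩
  have hCc : (↑u⁻¹ : (ResidueField R)[X]) = C ((↑u⁻¹ : (ResidueField R)[X]).coeff 0) :=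
    eq_C_of_natDegree_eq_zero (natDegree_eq_zero_of_isUnit u⁻¹.isUnit)
  have hc0 : (↑u⁻¹ : (ResidueField R)[X]).coeff 0 ≠ 0 := fun h0 => by
    have h1 := u⁻¹.ne_zero; rw [hCc, h0, map_zero] at h1; exact h1 rfl
  have hfXN : f.map φ = X ^ j * C ((↑u⁻¹ : (ResidueField R)[X]).coeff 0) := by
    rw [← hCc, ← hu2, Units.mul_inv_cancel_right]
  have hjN : j = N := by
    rw [← hND, hfXN, natDegree_mul (pow_ne_zero j X_ne_zero) (fun h0 => hc0 (C_eq_zero.mp h0)),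
      natDegree_X_pow, natDegree_C, add_zero]
  subst hjN
  have stepA : ∀ i, i ≠ N → f.coeff i ∈ maximalIdeal R := by
    intro i hi
    apply (hres _).mp
    have h1 : (f.map φ).coeff i = 0 := by
      rw [hfXN, mul_comm, coeff_C_mul, coeff_X_pow, if_neg hi, mul_zero]
    rwa [coeff_map] at h1
  -- Step B
  set P := f.comp (C s * X) with hPdef
  set Q := h.comp (C s * X) with hQdef
  set W : R[X] := ∑ i ∈ Finset.Icc 1 M, X ^ (M - i) * (g i).comp (C s * X) with hWdef
  have hPQ : P * Q = C (s ^ M) * (X ^ M + W) := by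
    have h1 := congrArg (fun p : R[X] => p.comp (C s * X)) heq
    simp only [mul_comp, add_comp, pow_comp, X_comp, C_comp, sum_comp] at h1
    rw [h1, mul_add, mul_pow, ← C_pow, Finset.mul_sum]
    congr 1
    apply Finset.sum_congr rfl
    intro i hi
    obtain ⟨hi1, hi2⟩ := Finset.mem_Icc.mp hi
    rw [mul_pow, ← C_pow, ← mul_assoc (C (s ^ i)), ← C_mul, ← pow_add,
      Nat.add_sub_cancel' hi2, mul_assoc]
  have hWM : s ∣ W.coeff M := by
    rw [hWdef, finset_sum_coeff]
    apply Finset.dvd_sum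
    intro i hi
    obtain ⟨hi1, hi2⟩ := Finset.mem_Icc.mp hi
    rw [coeff_X_pow_mul', if_pos (Nat.sub_le M i), Nat.sub_sub_self hi2, coeff_comp_C_mul_X]
    exact Dvd.dvd.mul_left (dvd_pow_self s (by omega)) _
  have hunit1 : IsUnit ((X ^ M + W).coeff M) := by
    rw [coeff_add, coeff_X_pow, if_pos rfl]
    obtain ⟨w, hw⟩ := hWM
    by_contra hn
    have hmem : 1 + W.coeff M ∈ maximalIdeal R := (mem_maximalIdeal _).mpr (mem_nonunits_iff.mpr hn)
    have hmem2 : W.coeff M ∈ maximalIdeal R := by rw [hw]; exact Ideal.mul_mem_right _ _ hsm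
    have h1 : (1 : R) ∈ maximalIdeal R := by simpa using Ideal.sub_mem _ hmem hmem2
    exact (maximalIdeal.isMaximal R).ne_top ((Ideal.eq_top_iff_one _).mpr h1)
  obtain ⟨w, hw⟩ := isUnit_of_dvd_unit (content_dvd_coeff M) hunit1
  set v : R := ↑(normUnit (s ^ M)) * ↑w with hv
  have hvu : IsUnit v := (Units.isUnit _).mul (Units.isUnit _)
  have hcPQ : P.content * Q.content = s ^ M * v := by
    rw [← content_mul, hPQ, content_C_mul, ← hw, normalize_apply, hv]; ring
  have key : C v * (P.primPart * Q.primPart) = X ^ M + W := by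
    have hC : (C (s ^ M) : R[X]) ≠ 0 := fun h0 => pow_ne_zero M hs0 (C_eq_zero.mp h0)
    apply mul_left_cancel₀ hC
    rw [← hPQ]
    calc C (s ^ M) * (C v * (P.primPart * Q.primPart))
        = C (s ^ M * v) * (P.primPart * Q.primPart) := by simp only [C_mul]; ring
      _ = C (P.content * Q.content) * (P.primPart * Q.primPart) := by rw [hcPQ]
      _ = C P.content * P.primPart * (C Q.content * Q.primPart) := by simp only [C_mul]; ring
      _ = P * Q := by rw [← eq_C_content_mul_primPart, ← eq_C_content_mul_primPart]
  have hGmap : ∀ q : R[X], (q.comp (C s * X)).map φ = C (φ (q.coeff 0)) := by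
    intro q
    ext n
    rw [coeff_map, coeff_comp_C_mul_X, coeff_C]
    cases n with
    | zero => simp
    | succ n => simp [map_mul, map_pow, hφs]
  have hkey2 : C (φ v) * (P.primPart.map φ * Q.primPart.map φ) = X ^ M + W.map φ := by
    have h1 := congrArg (Polynomial.map φ) key
    simpa only [Polynomial.map_mul, map_C, Polynomial.map_add, Polynomial.map_pow,
      Polynomial.map_X] using h1
  have hWdeg : (W.map φ).degree < ((M : ℕ) : WithBot ℕ) := by
    rw [hWdef, Polynomial.map_sum]
    apply lt_of_le_of_lt (degree_sum_le _ _)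
    rw [Finset.sup_lt_iff (by exact_mod_cast WithBot.bot_lt_coe M)]
    intro i hi
    obtain ⟨hi1, hi2⟩ := Finset.mem_Icc.mp hi
    rw [Polynomial.map_mul, Polynomial.map_pow, Polynomial.map_X, hGmap]
    refine lt_of_le_of_lt (degree_mul_le _ _) ?_
    refine lt_of_le_of_lt (add_le_add (degree_X_pow _).le degree_C_le) ?_
    rw [add_zero]
    exact_mod_cast (by omega : M - i < M)
  have hDdeg : (X ^ M + W.map φ).degree = ((M : ℕ) : WithBot ℕ) := by
    rw [degree_add_eq_left_of_degree_lt (by rwa [degree_X_pow]), degree_X_pow]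
  have hD0 : (X ^ M + W.map φ) ≠ 0 := fun h0 => by
    rw [h0, degree_zero] at hDdeg; exact (by simp at hDdeg)
  have hDnat : (X ^ M + W.map φ).natDegree = M := natDegree_eq_of_degree_eq_some hDdeg
  have hφv : φ v ≠ 0 := (hvu.map φ).ne_zero
  have hP₀0 : P.primPart.map φ ≠ 0 := by intro h0; apply hD0; rw [← hkey2, h0]; simp
  have hQ₀0 : Q.primPart.map φ ≠ 0 := by intro h0; apply hD0; rw [← hkey2, h0]; simp
  set T := (P.primPart.map φ).natDegree with hT
  set T' := (Q.primPart.map φ).natDegree with hT'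
  have hTT : T + T' = M := by
    have h2 := congrArg natDegree hkey2
    rwa [natDegree_mul (fun h0 => hφv (C_eq_zero.mp h0)) (mul_ne_zero hP₀0 hQ₀0),
      natDegree_mul hP₀0 hQ₀0, natDegree_C, zero_add, hDnat] at h2
  have hpT : IsUnit (P.primPart.coeff T) := by
    by_contra hn
    have h1 : φ (P.primPart.coeff T) = 0 :=
      (hres _).mpr ((mem_maximalIdeal _).mpr (mem_nonunits_iff.mpr hn))
    rw [← coeff_map, hT, coeff_natDegree] at h1
    exact (leadingCoeff_ne_zero.mpr hP₀0) h1
  have hqT : IsUnit (Q.primPart.coeff T') := by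
    by_contra hn
    have h1 : φ (Q.primPart.coeff T') = 0 :=
      (hres _).mpr ((mem_maximalIdeal _).mpr (mem_nonunits_iff.mpr hn))
    rw [← coeff_map, hT', coeff_natDegree] at h1
    exact (leadingCoeff_ne_zero.mpr hQ₀0) h1
  have hcP : ∀ n, f.coeff n * s ^ n = P.content * P.primPart.coeff n := by
    intro n
    conv_lhs => rw [← coeff_comp_C_mul_X f s n]
    conv_lhs => rw [show f.comp (C s * X) = C P.content * P.primPart from
      P.eq_C_content_mul_primPart]
    rw [coeff_C_mul]
  have hcQ : ∀ n, h.coeff n * s ^ n = Q.content * Q.primPart.coeff n := by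
    intro n
    conv_lhs => rw [← coeff_comp_C_mul_X h s n]
    conv_lhs => rw [show h.comp (C s * X) = C Q.content * Q.primPart from
      Q.eq_C_content_mul_primPart]
    rw [coeff_C_mul]
  have hmain : (f.coeff T * h.coeff T') * s ^ M
      = (v * (P.primPart.coeff T * Q.primPart.coeff T')) * s ^ M := by
    calc (f.coeff T * h.coeff T') * s ^ M
        = (f.coeff T * s ^ T) * (h.coeff T' * s ^ T') := by rw [← hTT, pow_add]; ring
      _ = (P.content * P.primPart.coeff T) * (Q.content * Q.primPart.coeff T') := by
          rw [hcP, hcQ]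
      _ = (P.content * Q.content) * (P.primPart.coeff T * Q.primPart.coeff T') := by ring
      _ = _ := by rw [hcPQ]; ring
  have hfT : IsUnit (f.coeff T) := by
    have h3 := mul_right_cancel₀ (pow_ne_zero M hs0) hmain
    exact isUnit_of_mul_isUnit_left (h3 ▸ hvu.mul (hpT.mul hqT))
  have hPN0 : P.coeff N ≠ 0 := by
    rw [hPdef, coeff_comp_C_mul_X]
    exact mul_ne_zero (by rw [coeff_natDegree]; exact hu.ne_zero) (pow_ne_zero _ hs0)
  have hPdegN : P.natDegree = N := le_antisymm
    (natDegree_le_iff_coeff_eq_zero.mpr fun k hk => by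
      rw [hPdef, coeff_comp_C_mul_X, coeff_eq_zero_of_natDegree_lt hk, zero_mul])
    (le_natDegree_of_ne_zero hPN0)
  have hTN : T = N := by
    have hTle : T ≤ N := by
      have h4 : T ≤ P.primPart.natDegree := natDegree_map_le
      rwa [natDegree_primPart, hPdegN] at h4
    rcases eq_or_lt_of_le hTle with h4 | h4
    · exact h4
    · exact absurd hfT (mem_nonunits_iff.mp ((mem_maximalIdeal _).mp (stepA T (by omega))))
  obtain ⟨pu, hpu⟩ := hpT
  have hsN : s ^ N ∣ P.content := by
    have h4 : P.content * ↑pu = f.coeff N * s ^ N := by rw [hpu, ← hcP, hTN]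
    have h5 : s ^ N ∣ P.content * ↑pu := h4 ▸ Dvd.dvd.mul_left dvd_rfl _
    exact Units.dvd_mul_right.mp h5
  intro i hi
  have h5 : s ^ N ∣ f.coeff i * s ^ i := by
    rw [← coeff_comp_C_mul_X f s i]
    exact hsN.trans (content_dvd_coeff i)
  rw [← Nat.sub_add_cancel hi, pow_add] at h5
  exact (mul_dvd_mul_iff_right (pow_ne_zero i hs0)).mp h5

/-- one-variable case of Lemma 5.5.  Let `A` be a semilocal Dedekind
domain and `s ≠ 0` an element of every maximal ideal of `A`.  For a nonzero `f ∈ A[t]` of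
degree `N` with coefficients `a₀, …, a_N`, the following are equivalent:
(a) `aᵢ ∈ s^{N−i}·A` for all `i ≤ N` and the leading coefficient `a_N` is a unit;
(b) there are `M ≥ 0` and `h, g₁, …, g_M ∈ A[t]` with
`f·h = t^M + s·t^{M−1}·g₁ + s²·t^{M−2}·g₂ + ⋯ + s^M·g_M`, and `a_N` is a unit. -/
theorem stmt_4 {A : Type*} [CommRing A] [IsDedekindDomain A] (hA : ¬ IsField A)
    (hfin : {I : Ideal A | I.IsMaximal}.Finite)
    (s : A) (hs0 : s ≠ 0) (hs : ∀ m : Ideal A, m.IsMaximal → s ∈ m)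
    (f : Polynomial A) (hf : f ≠ 0) :
    ((∀ i ≤ f.natDegree, s ^ (f.natDegree - i) ∣ f.coeff i) ∧ IsUnit f.leadingCoeff) ↔
    ((∃ (M : ℕ) (h : Polynomial A) (g : ℕ → Polynomial A),
        f * h = X ^ M + ∑ i ∈ Finset.Icc 1 M, C (s ^ i) * X ^ (M - i) * g i) ∧
      IsUnit f.leadingCoeff) := by
  classical
  constructor
  · rintro ⟨hd, hu⟩
    refine ⟨?_, hu⟩
    set N := f.natDegree with hN
    obtain ⟨un, hun⟩ := hu
    set vv : A := ↑un⁻¹ with hvv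
    have hvmul : f.coeff N * vv = 1 := by
      rw [show f.coeff N = ↑un from (coeff_natDegree).trans hun.symm, hvv]
      exact un.mul_inv
    set cc : ℕ → A := fun k => if hk : k ≤ N then (hd k hk).choose else 0 with hcc
    have hccspec : ∀ k (hk : k ≤ N), f.coeff k = s ^ (N - k) * cc k := by
      intro k hk
      rw [hcc]; simp only [dif_pos hk]
      exact (hd k hk).choose_spec
    refine ⟨N, C vv, fun i => C (cc (N - i) * vv), ?_⟩
    ext k
    have hterm : ∀ i ∈ Finset.Icc 1 N,
        (C (s ^ i) * X ^ (N - i) * C (cc (N - i) * vv)).coeff k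
          = if k = N - i then s ^ i * (cc (N - i) * vv) else 0 := by
      intro i hi
      have h1 : C (s ^ i) * X ^ (N - i) * C (cc (N - i) * vv)
          = C (s ^ i * (cc (N - i) * vv)) * X ^ (N - i) := by
        simp only [C_mul]; ring
      rw [h1, coeff_C_mul, coeff_X_pow, mul_ite, mul_one, mul_zero]
    rw [coeff_mul_C, coeff_add, coeff_X_pow, finset_sum_coeff,
      Finset.sum_congr rfl hterm]
    rcases lt_trichotomy k N with hk | hk | hk
    · rw [Finset.sum_eq_single (N - k)]
      · rw [if_neg (by omega), if_pos (by omega), zero_add,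
          Nat.sub_sub_self (by omega : k ≤ N), hccspec k (by omega)]
        ring
      · intro i hi hne
        rw [if_neg (by obtain ⟨h1, h2⟩ := Finset.mem_Icc.mp hi; omega)]
      · intro hni
        exact absurd (Finset.mem_Icc.mpr ⟨by omega, by omega⟩) hni
    · subst hk
      rw [if_pos rfl, hvmul, Finset.sum_eq_zero, add_zero]
      intro i hi
      rw [if_neg (by obtain ⟨h1, h2⟩ := Finset.mem_Icc.mp hi; omega)]
    · rw [coeff_eq_zero_of_natDegree_lt (by omega), zero_mul, if_neg (by omega),
        Finset.sum_eq_zero, add_zero]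
      intro i hi
      rw [if_neg (by obtain ⟨h1, h2⟩ := Finset.mem_Icc.mp hi; omega)]
  · rintro ⟨⟨M, h, g, heq⟩, hu⟩
    refine ⟨fun i hi => ?_, hu⟩
    rw [← Ideal.mem_span_singleton]
    apply Ideal.mem_of_localization_maximal
    intro 𝔪 h𝔪
    rw [Ideal.map_span, Set.image_singleton, Ideal.mem_span_singleton]
    set R := Localization.AtPrime 𝔪 with hR
    haveI : IsDomain R := IsLocalization.isDomain_localization 𝔪.primeCompl_le_nonZeroDivisors
    haveI : IsDiscreteValuationRing R :=
      IsLocalization.AtPrime.isDiscreteValuationRing_of_dedekind_domain A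
        (Ring.ne_bot_of_isMaximal_of_not_isField h𝔪 hA) R
    set ψ := algebraMap A R with hψ
    have hinj : Function.Injective ψ := IsLocalization.injective R 𝔪.primeCompl_le_nonZeroDivisors
    have hs0' : ψ s ≠ 0 := fun h0 => hs0 (hinj (by rw [h0, map_zero]))
    have hsm' : ψ s ∈ IsLocalRing.maximalIdeal R :=
      (IsLocalization.AtPrime.to_map_mem_maximal_iff R 𝔪 s).mpr (hs 𝔪 h𝔪)
    have heq' : f.map ψ * h.map ψ
        = X ^ M + ∑ i ∈ Finset.Icc 1 M, C (ψ s ^ i) * X ^ (M - i) * ((g i).map ψ) := by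
      have h1 := congrArg (Polynomial.map ψ) heq
      simpa only [Polynomial.map_mul, Polynomial.map_add, Polynomial.map_pow, Polynomial.map_X,
        Polynomial.map_sum, map_C, map_pow] using h1
    have hND : (f.map ψ).natDegree = f.natDegree :=
      natDegree_map_of_leadingCoeff_ne_zero ψ (hu.map ψ).ne_zero
    have hlu : IsUnit (f.map ψ).leadingCoeff := by
      rw [leadingCoeff, hND, coeff_map, coeff_natDegree]; exact hu.map ψ
    have h2 := stmt4_core (ψ s) hs0' hsm' (f.map ψ) (h.map ψ) hlu M
      (fun i => (g i).map ψ) heq' i (by rw [hND]; exact hi)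
    rw [hND, coeff_map] at h2
    rw [map_pow]
    exact h2
end

section
/- Let A be a semilocal Dedekind domain with maximal ideals 𝔪₁,…,𝔪ᵣ, s ∈ 𝔪₁⋯𝔪ᵣ nonzero, K the fraction field of A, and 𝒱 a set of normalized discrete valuations on K containing none of the valuations v₁,…,vᵣ attached to 𝔪₁,…,𝔪ᵣ. Let f, g ∈ A[t₁,…,tₙ] be polynomials. Then the product f·g belongs to Qₙ(A,𝒱,s) if and only if both f and g belong to Qₙ(A,𝒱,s). -/
open MvPolynomial

/-- Membership in `Qₙ(A, 𝒱, s)`: `f` is nonzero and satisfies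
(Q1) every coefficient lies in `s^{maxⱼ(Nⱼ−iⱼ)}·A`;
(Q2) the top coefficient `a_{N₁…Nₙ}` is a unit of `A`;
(Q2.5) `v(a_{i₁…iₙ}) ≥ v(a_{N₁…Nₙ})` for every `v ∈ 𝒱` (valuations written
multiplicatively, so `≥` becomes `≤`);
(Q3) substituting `0` for any variable `tⱼ` gives a nonzero polynomial. -/
def memQ {A : Type*} [CommRing A] [IsDomain A] {K : Type*} [Field K] [Algebra A K]
    [IsFractionRing A K] (𝒱 : Set (Valuation K (WithZero (Multiplicative ℤ)))) (s : A)
    {n : ℕ} (f : MvPolynomial (Fin n) A) : Prop :=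
  f ≠ 0 ∧
  (∀ d : Fin n →₀ ℕ, s ^ (Finset.univ.sup fun j => degreeOf j f - d j) ∣ coeff d f) ∧
  IsUnit (coeff (topDeg f) f) ∧
  (∀ v ∈ 𝒱, ∀ d : Fin n →₀ ℕ,
    v (algebraMap A K (coeff d f)) ≤ v (algebraMap A K (coeff (topDeg f) f))) ∧
  (∀ j : Fin n,
    MvPolynomial.eval₂ (MvPolynomial.C : A →+* MvPolynomial (Fin n) A)
      (fun i => if i = j then 0 else X i) f ≠ 0)

section Dvd
open IsDedekindDomain
variable {A : Type*} [CommRing A] [IsDedekindDomain A]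

lemma dvd_of_forall_intValuation {a b : A} (hb : b ≠ 0)
    (h : ∀ P : HeightOneSpectrum A, P.intValuation a ≤ P.intValuation b) : b ∣ a := by
  classical
  by_cases ha : a = 0
  · simp [ha]
  rw [← Ideal.span_singleton_le_span_singleton, ← Ideal.dvd_iff_le,
    UniqueFactorizationMonoid.dvd_iff_normalizedFactors_le_normalizedFactors
      (by simpa [Ideal.zero_eq_bot, Ideal.span_singleton_eq_bot] using hb)
      (by simpa [Ideal.zero_eq_bot, Ideal.span_singleton_eq_bot] using ha),
    Multiset.le_iff_count]
  intro I
  by_cases hI : I ∈ UniqueFactorizationMonoid.normalizedFactors (Ideal.span {b} : Ideal A)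
  · have hIp : Prime I := UniqueFactorizationMonoid.prime_of_normalized_factor I hI
    have hI0 : I ≠ ⊥ := hIp.ne_zero
    have hIprime : I.IsPrime := Ideal.isPrime_of_prime hIp
    set P : HeightOneSpectrum A := ⟨I, hIprime, hI0⟩
    have h2 := h P
    rw [IsDedekindDomain.HeightOneSpectrum.intValuation_apply,
      IsDedekindDomain.HeightOneSpectrum.intValuation_apply,
      P.intValuationDef_if_neg ha, P.intValuationDef_if_neg hb, WithZero.exp_le_exp,
      neg_le_neg_iff, Int.ofNat_le] at h2
    have ha' : (Ideal.span {a} : Ideal A) ≠ 0 := by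
      simpa [Ideal.zero_eq_bot, Ideal.span_singleton_eq_bot] using ha
    have hb' : (Ideal.span {b} : Ideal A) ≠ 0 := by
      simpa [Ideal.zero_eq_bot, Ideal.span_singleton_eq_bot] using hb
    rwa [count_associates_factors_eq ha' hIprime hI0,
      count_associates_factors_eq hb' hIprime hI0] at h2
  · simp [Multiset.count_eq_zero_of_notMem hI]

end Dvd

theorem mul_lt_mul_of_lt_of_le₀ {a b c d : WithZero (Multiplicative ℤ)} (hab : a ≤ b)
    (hb : b ≠ 0) (hcd : c < d) : a * c < b * d :=
  lt_of_le_of_lt (mul_le_mul_left hab c) (mul_lt_mul_of_pos_left hcd (zero_lt_iff.mpr hb))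

section Gauss
variable {K : Type*} [Field K] {n : ℕ}

local notation "Γ" => WithZero (Multiplicative ℤ)

/-- Weighted Gauss sup of a polynomial. -/
noncomputable def gSup (v : Valuation K Γ) (μ : (Fin n →₀ ℕ) → Γ)
    (F : MvPolynomial (Fin n) K) : Γ :=
  F.support.sup fun d => v (coeff d F) * μ d

lemma coeff_le_gSup (v : Valuation K Γ) (μ : (Fin n →₀ ℕ) → Γ) (F : MvPolynomial (Fin n) K)
    (d : Fin n →₀ ℕ) : v (coeff d F) * μ d ≤ gSup v μ F := by
  by_cases h : d ∈ F.support
  · exact Finset.le_sup (f := fun d => v (coeff d F) * μ d) h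
  · rw [MvPolynomial.notMem_support_iff.mp h]
    simp only [map_zero, zero_mul]
    exact zero_le'

lemma gSup_le_iff {v : Valuation K Γ} {μ : (Fin n →₀ ℕ) → Γ} {F : MvPolynomial (Fin n) K}
    {γ : Γ} : gSup v μ F ≤ γ ↔ ∀ d, v (coeff d F) * μ d ≤ γ :=
  ⟨fun h d => le_trans (coeff_le_gSup v μ F d) h, fun h => Finset.sup_le fun d _ => h d⟩

lemma exists_gSup {v : Valuation K Γ} {μ : (Fin n →₀ ℕ) → Γ} {F : MvPolynomial (Fin n) K}
    (hF : F ≠ 0) : ∃ d ∈ F.support, gSup v μ F = v (coeff d F) * μ d :=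
  Finset.exists_mem_eq_sup _ (support_nonempty.mpr hF) _

lemma gSup_ne_zero {v : Valuation K Γ} {μ : (Fin n →₀ ℕ) → Γ} (hμ0 : ∀ d, μ d ≠ 0)
    {F : MvPolynomial (Fin n) K} (hF : F ≠ 0) : gSup v μ F ≠ 0 := by
  obtain ⟨d, hd, h⟩ := exists_gSup (v := v) (μ := μ) hF
  rw [h]
  exact mul_ne_zero (by simp [v.ne_zero_iff, MvPolynomial.mem_support_iff.mp hd]) (hμ0 d)

lemma lt_gSup_of_lex_lt {v : Valuation K Γ} {μ : (Fin n →₀ ℕ) → Γ} (hμ0 : ∀ d, μ d ≠ 0)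
    {F : MvPolynomial (Fin n) K} (hF : F ≠ 0) {d₀ u : Fin n →₀ ℕ}
    (hd₀ : v (coeff d₀ F) * μ d₀ = gSup v μ F)
    (hmin : ∀ e ∈ F.support.filter (fun d => v (coeff d F) * μ d = gSup v μ F),
      toLex d₀ ≤ toLex e)
    (hu : toLex u < toLex d₀) : v (coeff u F) * μ u < gSup v μ F := by
  rcases eq_or_lt_of_le (coeff_le_gSup v μ F u) with he | he
  · exfalso
    have hu0 : u ∈ F.support := by
      by_contra hns
      rw [MvPolynomial.notMem_support_iff.mp hns, map_zero, zero_mul] at he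
      exact (gSup_ne_zero hμ0 hF) he.symm
    exact absurd (hmin u (Finset.mem_filter.mpr ⟨hu0, he⟩)) (not_le.mpr hu)
  · exact he

lemma gSup_mul (v : Valuation K Γ) {μ : (Fin n →₀ ℕ) → Γ}
    (hμ : ∀ a b, μ (a + b) = μ a * μ b) (hμ0 : ∀ d, μ d ≠ 0)
    {F G : MvPolynomial (Fin n) K} (hF : F ≠ 0) (hG : G ≠ 0) :
    gSup v μ (F * G) = gSup v μ F * gSup v μ G := by
  refine le_antisymm ?_ ?_
  · refine gSup_le_iff.mpr fun d => ?_
    rw [coeff_mul]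
    have hbound : ∀ x ∈ Finset.HasAntidiagonal.antidiagonal d,
        v (coeff x.1 F * coeff x.2 G) ≤ gSup v μ F * gSup v μ G * (μ d)⁻¹ := by
      rintro ⟨u, w⟩ hx
      have hsum : u + w = d := Finset.HasAntidiagonal.mem_antidiagonal.mp hx
      have h1 : (v (coeff u F) * μ u) * (v (coeff w G) * μ w) ≤ gSup v μ F * gSup v μ G :=
        mul_le_mul' (coeff_le_gSup v μ F u) (coeff_le_gSup v μ G w)
      rw [mul_mul_mul_comm, ← hμ, hsum] at h1
      have h1' := mul_le_mul_left h1 (μ d)⁻¹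
      rw [mul_assoc, mul_inv_cancel₀ (hμ0 d), mul_one] at h1'
      rw [map_mul]
      exact h1'
    have h2 := v.map_sum_le hbound
    calc v (∑ x ∈ Finset.HasAntidiagonal.antidiagonal d, coeff x.1 F * coeff x.2 G) * μ d
        ≤ gSup v μ F * gSup v μ G * (μ d)⁻¹ * μ d := mul_le_mul_left h2 _
      _ = gSup v μ F * gSup v μ G := by
          rw [mul_assoc, inv_mul_cancel₀ (hμ0 d), mul_one]
  · obtain ⟨dF, hdFm, hdF⟩ := exists_gSup (v := v) (μ := μ) hF
    obtain ⟨dG, hdGm, hdG⟩ := exists_gSup (v := v) (μ := μ) hG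
    obtain ⟨d₀, hd₀m, hd₀min⟩ := (F.support.filter
        (fun d => v (coeff d F) * μ d = gSup v μ F)).exists_min_image (fun d => toLex d)
      ⟨dF, Finset.mem_filter.mpr ⟨hdFm, hdF.symm⟩⟩
    obtain ⟨e₀, he₀m, he₀min⟩ := (G.support.filter
        (fun d => v (coeff d G) * μ d = gSup v μ G)).exists_min_image (fun d => toLex d)
      ⟨dG, Finset.mem_filter.mpr ⟨hdGm, hdG.symm⟩⟩
    have hd₀ : v (coeff d₀ F) * μ d₀ = gSup v μ F := (Finset.mem_filter.mp hd₀m).2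
    have he₀ : v (coeff e₀ G) * μ e₀ = gSup v μ G := (Finset.mem_filter.mp he₀m).2
    have hvF : v (coeff d₀ F) ≠ 0 := by
      simp [v.ne_zero_iff,
        MvPolynomial.mem_support_iff.mp (Finset.mem_filter.mp hd₀m).1]
    have hvG : v (coeff e₀ G) ≠ 0 := by
      simp [v.ne_zero_iff,
        MvPolynomial.mem_support_iff.mp (Finset.mem_filter.mp he₀m).1]
    have hmemj : ((d₀, e₀) : (Fin n →₀ ℕ) × (Fin n →₀ ℕ)) ∈ Finset.HasAntidiagonal.antidiagonal (d₀ + e₀) :=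
      Finset.HasAntidiagonal.mem_antidiagonal.mpr rfl
    have h0 : v (coeff d₀ F * coeff e₀ G) ≠ 0 := by
      rw [map_mul]; exact mul_ne_zero hvF hvG
    have hterm : ∀ x ∈ Finset.HasAntidiagonal.antidiagonal (d₀ + e₀) \ {((d₀, e₀) : (Fin n →₀ ℕ) × (Fin n →₀ ℕ))},
        v (coeff x.1 F * coeff x.2 G) < v (coeff d₀ F * coeff e₀ G) := by
      rintro ⟨u, w⟩ hx
      rw [Finset.mem_sdiff, Finset.mem_singleton] at hx
      obtain ⟨hmem, hne⟩ := hx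
      rw [map_mul (f := v), map_mul (f := v)]
      have hsum : u + w = d₀ + e₀ := Finset.HasAntidiagonal.mem_antidiagonal.mp hmem
      have hμeq : μ u * μ w = μ d₀ * μ e₀ := by rw [← hμ, ← hμ, hsum]
      rcases lt_trichotomy (toLex u) (toLex d₀) with hu | hu | hu
      · have h1 : v (coeff u F) * μ u < gSup v μ F :=
          lt_gSup_of_lex_lt hμ0 hF hd₀ hd₀min hu
        have h2 : v (coeff w G) * μ w ≤ gSup v μ G := coeff_le_gSup v μ G w
        have h4 : (v (coeff u F) * v (coeff w G)) * (μ u * μ w)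
            < (v (coeff d₀ F) * v (coeff e₀ G)) * (μ d₀ * μ e₀) := by
          calc (v (coeff u F) * v (coeff w G)) * (μ u * μ w)
              = (v (coeff w G) * μ w) * (v (coeff u F) * μ u) := by
                rw [mul_mul_mul_comm]
                exact mul_comm _ _
            _ < gSup v μ G * gSup v μ F :=
                mul_lt_mul_of_lt_of_le₀ h2 (gSup_ne_zero hμ0 hG) h1
            _ = (v (coeff d₀ F) * μ d₀) * (v (coeff e₀ G) * μ e₀) := by
                rw [hd₀, he₀, mul_comm]
            _ = _ := mul_mul_mul_comm _ _ _ _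
        rw [hμeq] at h4
        exact lt_of_mul_lt_mul_right' h4
      · exfalso
        have : u = d₀ := by exact_mod_cast hu
        subst this
        exact hne (by rw [Prod.mk.injEq]; exact ⟨rfl, add_left_cancel hsum⟩)
      · have hw : toLex w < toLex e₀ := by
          have h5 : toLex d₀ + toLex w < toLex u + toLex w := add_lt_add_left hu _
          have h6 : toLex u + toLex w = toLex d₀ + toLex e₀ := by
            exact_mod_cast congrArg toLex hsum
          rw [h6] at h5
          exact lt_of_add_lt_add_left h5
        have h1 : v (coeff w G) * μ w < gSup v μ G :=
          lt_gSup_of_lex_lt hμ0 hG he₀ he₀min hw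
        have h2 : v (coeff u F) * μ u ≤ gSup v μ F := coeff_le_gSup v μ F u
        have h4 : (v (coeff u F) * v (coeff w G)) * (μ u * μ w)
            < (v (coeff d₀ F) * v (coeff e₀ G)) * (μ d₀ * μ e₀) := by
          calc (v (coeff u F) * v (coeff w G)) * (μ u * μ w)
              = (v (coeff u F) * μ u) * (v (coeff w G) * μ w) := mul_mul_mul_comm _ _ _ _
            _ < gSup v μ F * gSup v μ G :=
                mul_lt_mul_of_lt_of_le₀ h2 (gSup_ne_zero hμ0 hF) h1
            _ = (v (coeff d₀ F) * μ d₀) * (v (coeff e₀ G) * μ e₀) := by rw [hd₀, he₀]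
            _ = _ := mul_mul_mul_comm _ _ _ _
        rw [hμeq] at h4
        exact lt_of_mul_lt_mul_right' h4
    have key : v (coeff (d₀ + e₀) (F * G)) = v (coeff d₀ F) * v (coeff e₀ G) := by
      rw [coeff_mul, Finset.sum_eq_add_sum_sdiff_singleton_of_mem hmemj]
      rw [v.map_add_eq_of_lt_left (v.map_sum_lt h0 hterm), map_mul]
    calc gSup v μ F * gSup v μ G
        = v (coeff (d₀ + e₀) (F * G)) * μ (d₀ + e₀) := by
          rw [key, hμ, ← hd₀, ← he₀, mul_mul_mul_comm]
      _ ≤ gSup v μ (F * G) := coeff_le_gSup v μ (F * G) _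

end Gauss

section Deg
variable {R : Type*} [CommRing R] [IsDomain R]

lemma topDeg_apply {σ : Type*} [Fintype σ] (f : MvPolynomial σ R) (j : σ) :
    topDeg f j = degreeOf j f := rfl

lemma degreeOf_mul_eq' {n : ℕ} (j : Fin n) {f g : MvPolynomial (Fin n) R}
    (hf : f ≠ 0) (hg : g ≠ 0) :
    degreeOf j (f * g) = degreeOf j f + degreeOf j g := by
  cases n with
  | zero => exact j.elim0
  | succ m =>
    have hswap : ∀ p : MvPolynomial (Fin (m + 1)) R,
        degreeOf j p = degreeOf 0 (rename (Equiv.swap j 0) p) := by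
      intro p
      have h := degreeOf_rename_of_injective (Equiv.swap j 0).injective (p := p) j
      rw [Equiv.swap_apply_left] at h
      exact h.symm
    have hren : ∀ p : MvPolynomial (Fin (m + 1)) R, p ≠ 0 → rename (Equiv.swap j 0) p ≠ 0 := by
      intro p hp hc
      exact hp (MvPolynomial.rename_injective _ (Equiv.swap j 0).injective
        (by rw [hc, map_zero]))
    have h1 : (finSuccEquiv R m) (rename (Equiv.swap j 0) f) ≠ 0 := by
      rw [Ne, EmbeddingLike.map_eq_zero_iff]
      exact hren f hf
    have h2 : (finSuccEquiv R m) (rename (Equiv.swap j 0) g) ≠ 0 := by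
      rw [Ne, EmbeddingLike.map_eq_zero_iff]
      exact hren g hg
    rw [hswap, hswap, hswap, map_mul, ← natDegree_finSuccEquiv, ← natDegree_finSuccEquiv,
      ← natDegree_finSuccEquiv, map_mul]
    exact Polynomial.natDegree_mul h1 h2

lemma topDeg_mul {n : ℕ} {f g : MvPolynomial (Fin n) R} (hf : f ≠ 0) (hg : g ≠ 0) :
    topDeg (f * g) = topDeg f + topDeg g := by
  ext j
  rw [Finsupp.add_apply, topDeg_apply, topDeg_apply, topDeg_apply, degreeOf_mul_eq' j hf hg]

lemma coeff_eq_zero_of_degreeOf_lt {σ : Type*} {p : MvPolynomial σ R} {u : σ →₀ ℕ} {j : σ}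
    (h : degreeOf j p < u j) : coeff u p = 0 := by
  by_contra hc
  have h2 := Finset.le_sup (f := fun d => d j) (MvPolynomial.mem_support_iff.mpr hc)
  rw [← degreeOf_eq_sup] at h2
  omega

lemma coeff_topDeg_mul {n : ℕ} {f g : MvPolynomial (Fin n) R} (hf : f ≠ 0) (hg : g ≠ 0) :
    coeff (topDeg (f * g)) (f * g) = coeff (topDeg f) f * coeff (topDeg g) g := by
  rw [topDeg_mul hf hg, coeff_mul]
  refine Finset.sum_eq_single_of_mem (topDeg f, topDeg g) (Finset.HasAntidiagonal.mem_antidiagonal.mpr rfl) ?_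
  rintro ⟨u, w⟩ hmem hne
  have hsum : u + w = topDeg f + topDeg g := Finset.HasAntidiagonal.mem_antidiagonal.mp hmem
  have hune : u ≠ topDeg f := by
    rintro rfl
    exact hne (by rw [Prod.mk.injEq]; exact ⟨rfl, add_left_cancel hsum⟩)
  obtain ⟨j, hj⟩ := Finsupp.ne_iff.mp hune
  have hjsum : u j + w j = degreeOf j f + degreeOf j g := by
    have h3 := congrArg (fun d : Fin n →₀ ℕ => d j) hsum
    simpa [Finsupp.add_apply, topDeg_apply] using h3
  rw [topDeg_apply] at hj
  rcases Nat.lt_or_ge (degreeOf j f) (u j) with hlt | hge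
  · rw [coeff_eq_zero_of_degreeOf_lt hlt, zero_mul]
  · have : degreeOf j g < w j := by omega
    rw [coeff_eq_zero_of_degreeOf_lt this, mul_zero]

end Deg

section ValCrit

open IsDedekindDomain

local notation "Γ" => WithZero (Multiplicative ℤ)

lemma eq_of_mul_le_mul {a b c d : Γ} (hab : a ≤ b) (hcd : c ≤ d) (h : b * d ≤ a * c)
    (hb : b ≠ 0) (hd : d ≠ 0) : a = b ∧ c = d := by
  constructor
  · by_contra hne
    have h1 : a < b := lt_of_le_of_ne hab hne
    have h2 : c * a < d * b := mul_lt_mul_of_lt_of_le₀ hcd hd h1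
    rw [mul_comm c a, mul_comm d b] at h2
    exact absurd h (not_le.mpr h2)
  · by_contra hne
    have h1 : c < d := lt_of_le_of_ne hcd hne
    have h2 : a * c < b * d := mul_lt_mul_of_lt_of_le₀ hab hb h1
    exact absurd h (not_le.mpr h2)

variable {A : Type*} [CommRing A] [IsDedekindDomain A]
    {K : Type*} [Field K] [Algebra A K] [IsFractionRing A K]

lemma val_isUnit_eq_one (P : HeightOneSpectrum A) {u : A} (hu : IsUnit u) :
    P.valuation (K := K) (algebraMap A K u) = 1 := by
  obtain ⟨w, rfl⟩ := hu
  have h1 : P.valuation (K := K) (algebraMap A K (w : A)) *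
      P.valuation (K := K) (algebraMap A K ((w⁻¹ : Aˣ) : A)) = 1 := by
    rw [← map_mul, ← map_mul, Units.mul_inv, map_one, map_one]
  refine le_antisymm (P.valuation_le_one (w : A)) ?_
  calc (1 : Γ) = _ * _ := h1.symm
    _ ≤ P.valuation (K := K) (algebraMap A K (w : A)) * 1 :=
        mul_le_mul_right (P.valuation_le_one ((w⁻¹ : Aˣ) : A)) _
    _ = _ := mul_one _

variable {n : ℕ}

lemma q1_iff_crit {s : A} (hs0 : s ≠ 0) (f : MvPolynomial (Fin n) A) :
    (∀ d : Fin n →₀ ℕ, s ^ (Finset.univ.sup fun j => degreeOf j f - d j) ∣ coeff d f) ↔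
    (∀ (P : HeightOneSpectrum A) (j : Fin n),
      gSup (P.valuation (K := K)) (fun d => P.valuation (K := K) (algebraMap A K s) ^ (d j))
        (MvPolynomial.map (algebraMap A K) f) ≤
        P.valuation (K := K) (algebraMap A K s) ^ (degreeOf j f)) := by
  have hγ : ∀ P : HeightOneSpectrum A, P.valuation (K := K) (algebraMap A K s) ≠ 0 :=
    fun P => by
      rw [Valuation.ne_zero_iff]
      exact (map_ne_zero_iff _ (IsFractionRing.injective A K)).mpr hs0
  have hγ1 : ∀ P : HeightOneSpectrum A, P.valuation (K := K) (algebraMap A K s) ≤ 1 :=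
    fun P => P.valuation_le_one s
  constructor
  · intro h P j
    rw [gSup_le_iff]
    intro d
    rw [coeff_map]
    obtain ⟨c, hc⟩ := h d
    set k := Finset.univ.sup fun j' => degreeOf j' f - d j' with hkdef
    have h1 : P.valuation (K := K) (algebraMap A K (coeff d f)) ≤
        P.valuation (K := K) (algebraMap A K s) ^ k := by
      rw [hc, map_mul, map_mul, map_pow, map_pow]
      calc _ ≤ P.valuation (K := K) (algebraMap A K s) ^ k * 1 :=
            mul_le_mul_right (P.valuation_le_one c) _
        _ = _ := mul_one _
    calc P.valuation (K := K) (algebraMap A K (coeff d f)) *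
          P.valuation (K := K) (algebraMap A K s) ^ (d j)
        ≤ P.valuation (K := K) (algebraMap A K s) ^ k *
          P.valuation (K := K) (algebraMap A K s) ^ (d j) := mul_le_mul_left h1 _
      _ = P.valuation (K := K) (algebraMap A K s) ^ (k + d j) := (pow_add _ _ _).symm
      _ ≤ P.valuation (K := K) (algebraMap A K s) ^ (degreeOf j f) := by
          refine pow_le_pow_right_of_le_one' (hγ1 P) ?_
          have h2 : degreeOf j f - d j ≤ k := by
            rw [hkdef]
            exact Finset.le_sup (f := fun j' => degreeOf j' f - d j') (Finset.mem_univ j)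
          omega
  · intro h d
    set k := Finset.univ.sup fun j' => degreeOf j' f - d j' with hkdef
    rcases Nat.eq_zero_or_pos k with hk0 | hkpos
    · rw [hk0, pow_zero]; exact one_dvd _
    · have hne : (Finset.univ : Finset (Fin n)).Nonempty := by
        by_contra hcon
        rw [Finset.not_nonempty_iff_eq_empty] at hcon
        rw [hkdef, hcon, Finset.sup_empty] at hkpos
        exact absurd hkpos (by simp)
      obtain ⟨j₀, -, hj₀⟩ :=
        Finset.exists_mem_eq_sup Finset.univ hne (fun j' => degreeOf j' f - d j')
      rw [← hkdef] at hj₀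
      have hdlt : d j₀ + k = degreeOf j₀ f := by omega
      apply dvd_of_forall_intValuation (pow_ne_zero _ hs0)
      intro P
      rw [← IsDedekindDomain.HeightOneSpectrum.valuation_of_algebraMap (K := K),
        ← IsDedekindDomain.HeightOneSpectrum.valuation_of_algebraMap (K := K), algebraMap.coe_pow, map_pow]
      have h2 := gSup_le_iff.mp (h P j₀) d
      rw [coeff_map] at h2
      have h3 := mul_le_mul_left
        h2 ((P.valuation (K := K) (algebraMap A K s) ^ (d j₀))⁻¹)
      rw [mul_assoc, mul_inv_cancel₀ (pow_ne_zero _ (hγ P)), mul_one, ← hdlt, pow_add,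
        mul_comm (P.valuation (K := K) (algebraMap A K s) ^ (d j₀)), mul_assoc,
        mul_inv_cancel₀ (pow_ne_zero _ (hγ P)), mul_one] at h3
      exact h3

end ValCrit

section Main

open IsDedekindDomain

local notation "Γ" => WithZero (Multiplicative ℤ)

variable {A : Type*} [CommRing A] [IsDedekindDomain A]
    {K : Type*} [Field K] [Algebra A K] [IsFractionRing A K]
    (𝒱 : Set (Valuation K Γ)) (s : A) {n : ℕ}

lemma memQ_mul (hs0 : s ≠ 0) {f g : MvPolynomial (Fin n) A}
    (hf : memQ 𝒱 s f) (hg : memQ 𝒱 s g) : memQ 𝒱 s (f * g) := by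
  obtain ⟨hf0, hf1, hf2, hf25, hf3⟩ := hf
  obtain ⟨hg0, hg1, hg2, hg25, hg3⟩ := hg
  have inj := IsFractionRing.injective A K
  have hmapne : ∀ p : MvPolynomial (Fin n) A, p ≠ 0 →
      MvPolynomial.map (algebraMap A K) p ≠ 0 := fun p hp hc =>
    hp (MvPolynomial.map_injective _ inj (by rw [hc, map_zero]))
  have hne0 : f * g ≠ 0 := mul_ne_zero hf0 hg0
  refine ⟨hne0, ?_, ?_, ?_, ?_⟩
  · -- Q1
    rw [q1_iff_crit (K := K) hs0]
    intro P j
    set γ := P.valuation (K := K) (algebraMap A K s) with hγdef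
    have hγ0 : γ ≠ 0 := by
      rw [hγdef, Valuation.ne_zero_iff]
      exact (map_ne_zero_iff _ inj).mpr hs0
    have hμadd : ∀ a b : Fin n →₀ ℕ, γ ^ ((a + b) j) = γ ^ (a j) * γ ^ (b j) := fun a b => by
      rw [Finsupp.add_apply, pow_add]
    have hμ0 : ∀ d : Fin n →₀ ℕ, γ ^ (d j) ≠ 0 := fun d => pow_ne_zero _ hγ0
    have hcf := (q1_iff_crit (K := K) hs0 f).mp hf1 P j
    have hcg := (q1_iff_crit (K := K) hs0 g).mp hg1 P j
    rw [map_mul (MvPolynomial.map (algebraMap A K)) f g, gSup_mul _ hμadd hμ0 (hmapne f hf0) (hmapne g hg0),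
      degreeOf_mul_eq' j hf0 hg0, pow_add]
    exact mul_le_mul' hcf hcg
  · -- Q2
    rw [coeff_topDeg_mul hf0 hg0]
    exact hf2.mul hg2
  · -- Q2.5
    intro v hv d
    have h1 : gSup v (fun _ => (1 : Γ)) (MvPolynomial.map (algebraMap A K) f) =
        v (algebraMap A K (coeff (topDeg f) f)) := by
      refine le_antisymm (gSup_le_iff.mpr fun d' => ?_) ?_
      · rw [mul_one, coeff_map]
        exact hf25 v hv d'
      · simpa [coeff_map] using
          coeff_le_gSup v (fun _ => (1 : Γ)) (MvPolynomial.map (algebraMap A K) f) (topDeg f)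
    have h2 : gSup v (fun _ => (1 : Γ)) (MvPolynomial.map (algebraMap A K) g) =
        v (algebraMap A K (coeff (topDeg g) g)) := by
      refine le_antisymm (gSup_le_iff.mpr fun d' => ?_) ?_
      · rw [mul_one, coeff_map]
        exact hg25 v hv d'
      · simpa [coeff_map] using
          coeff_le_gSup v (fun _ => (1 : Γ)) (MvPolynomial.map (algebraMap A K) g) (topDeg g)
    have h3 : v (algebraMap A K (coeff d (f * g))) ≤
        gSup v (fun _ => (1 : Γ)) (MvPolynomial.map (algebraMap A K) (f * g)) := by
      have h3' := coeff_le_gSup v (fun _ => (1 : Γ))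
        (MvPolynomial.map (algebraMap A K) (f * g)) d
      rwa [coeff_map, mul_one] at h3'
    rw [coeff_topDeg_mul hf0 hg0, map_mul, map_mul]
    calc v (algebraMap A K (coeff d (f * g)))
        ≤ gSup v (fun _ => (1 : Γ)) (MvPolynomial.map (algebraMap A K) (f * g)) := h3
      _ = _ := by
          rw [map_mul (MvPolynomial.map (algebraMap A K)) f g,
            gSup_mul _ (fun _ _ => (one_mul (1 : Γ)).symm) (fun _ => one_ne_zero)
              (hmapne f hf0) (hmapne g hg0), h1, h2]
  · -- Q3
    intro j
    rw [eval₂_mul]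
    exact mul_ne_zero (hf3 j) (hg3 j)

lemma memQ_mul_left (hs0 : s ≠ 0) {f g : MvPolynomial (Fin n) A}
    (h : memQ 𝒱 s (f * g)) : memQ 𝒱 s f := by
  obtain ⟨hne, hQ1, hQ2, hQ25, hQ3⟩ := h
  have inj := IsFractionRing.injective A K
  have hmapne : ∀ p : MvPolynomial (Fin n) A, p ≠ 0 →
      MvPolynomial.map (algebraMap A K) p ≠ 0 := fun p hp hc =>
    hp (MvPolynomial.map_injective _ inj (by rw [hc, map_zero]))
  have hf0 : f ≠ 0 := left_ne_zero_of_mul hne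
  have hg0 : g ≠ 0 := right_ne_zero_of_mul hne
  have htop := coeff_topDeg_mul (R := A) hf0 hg0
  rw [htop] at hQ2
  have hQ2f : IsUnit (coeff (topDeg f) f) := isUnit_of_mul_isUnit_left hQ2
  have hQ2g : IsUnit (coeff (topDeg g) g) := isUnit_of_mul_isUnit_right hQ2
  refine ⟨hf0, ?_, hQ2f, ?_, ?_⟩
  · -- Q1
    rw [q1_iff_crit (K := K) hs0]
    intro P j
    set γ := P.valuation (K := K) (algebraMap A K s) with hγdef
    have hγ0 : γ ≠ 0 := by
      rw [hγdef, Valuation.ne_zero_iff]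
      exact (map_ne_zero_iff _ inj).mpr hs0
    have hμadd : ∀ a b : Fin n →₀ ℕ, γ ^ ((a + b) j) = γ ^ (a j) * γ ^ (b j) := fun a b => by
      rw [Finsupp.add_apply, pow_add]
    have hμ0 : ∀ d : Fin n →₀ ℕ, γ ^ (d j) ≠ 0 := fun d => pow_ne_zero _ hγ0
    have hcrit := (q1_iff_crit (K := K) hs0 (f * g)).mp hQ1 P j
    rw [map_mul (MvPolynomial.map (algebraMap A K)) f g, gSup_mul _ hμadd hμ0 (hmapne f hf0) (hmapne g hg0),
      degreeOf_mul_eq' j hf0 hg0, pow_add] at hcrit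
    have hlow : ∀ (p : MvPolynomial (Fin n) A), IsUnit (coeff (topDeg p) p) →
        γ ^ degreeOf j p ≤
          gSup (P.valuation (K := K)) (fun d => γ ^ (d j))
            (MvPolynomial.map (algebraMap A K) p) := by
      intro p hu
      have h4 := coeff_le_gSup (P.valuation (K := K)) (fun d => γ ^ (d j))
        (MvPolynomial.map (algebraMap A K) p) (topDeg p)
      rw [coeff_map, val_isUnit_eq_one P hu, one_mul] at h4
      exact h4
    obtain ⟨hfe, hge⟩ := eq_of_mul_le_mul (hlow f hQ2f) (hlow g hQ2g) hcrit
      (gSup_ne_zero hμ0 (hmapne f hf0)) (gSup_ne_zero hμ0 (hmapne g hg0))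
    exact le_of_eq hfe.symm
  · -- Q2.5
    intro v hv d
    have hub : ∀ p : MvPolynomial (Fin n) A,
        v (algebraMap A K (coeff (topDeg p) p)) ≤
          gSup v (fun _ => (1 : Γ)) (MvPolynomial.map (algebraMap A K) p) := fun p => by
      simpa [coeff_map] using
        coeff_le_gSup v (fun _ => (1 : Γ)) (MvPolynomial.map (algebraMap A K) p) (topDeg p)
    have hup : gSup v (fun _ => (1 : Γ)) (MvPolynomial.map (algebraMap A K) (f * g)) ≤
        v (algebraMap A K (coeff (topDeg f) f)) * v (algebraMap A K (coeff (topDeg g) g)) := by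
      refine gSup_le_iff.mpr fun d' => ?_
      rw [mul_one, coeff_map]
      have h5 := hQ25 v hv d'
      rw [htop, map_mul, map_mul] at h5
      exact h5
    have hmulSup : gSup v (fun _ => (1 : Γ)) (MvPolynomial.map (algebraMap A K) f) *
        gSup v (fun _ => (1 : Γ)) (MvPolynomial.map (algebraMap A K) g) =
        v (algebraMap A K (coeff (topDeg f) f)) * v (algebraMap A K (coeff (topDeg g) g)) := by
      refine le_antisymm ?_ (mul_le_mul' (hub f) (hub g))
      rw [← gSup_mul _ (fun _ _ => (one_mul (1 : Γ)).symm) (fun _ => one_ne_zero)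
        (hmapne f hf0) (hmapne g hg0), ← map_mul (MvPolynomial.map (algebraMap A K)) f g]
      exact hup
    obtain ⟨hfe, hge⟩ := eq_of_mul_le_mul (hub f) (hub g) (le_of_eq hmulSup)
      (gSup_ne_zero (fun _ => one_ne_zero) (hmapne f hf0))
      (gSup_ne_zero (fun _ => one_ne_zero) (hmapne g hg0))
    have h6 : v (algebraMap A K (coeff d f)) ≤
        gSup v (fun _ => (1 : Γ)) (MvPolynomial.map (algebraMap A K) f) := by
      simpa [coeff_map] using
        coeff_le_gSup v (fun _ => (1 : Γ)) (MvPolynomial.map (algebraMap A K) f) d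
    rw [← hfe] at h6
    exact h6
  · -- Q3
    intro j
    have h7 := hQ3 j
    rw [eval₂_mul] at h7
    exact left_ne_zero_of_mul h7

end Main

/-- Lemma 5.7.  Let `A` be a semilocal Dedekind domain, `s ≠ 0` an
element of every maximal ideal, `K = Frac A`, and `𝒱` a set of normalized discrete
valuations on `K` containing none of the valuations attached to the maximal ideals of `A`.
For `f, g ∈ A[t₁,…,tₙ]` one has `f·g ∈ Qₙ(A,𝒱,s)` iff `f ∈ Qₙ(A,𝒱,s)` and
`g ∈ Qₙ(A,𝒱,s)`. -/
theorem stmt_7 {A : Type*} [CommRing A] [IsDedekindDomain A] (hA : ¬ IsField A)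
    (hfin : {I : Ideal A | I.IsMaximal}.Finite)
    {K : Type*} [Field K] [Algebra A K] [IsFractionRing A K]
    (𝒱 : Set (Valuation K (WithZero (Multiplicative ℤ))))
    (hnorm : ∀ v ∈ 𝒱, Function.Surjective v)
    (hnot : ∀ v ∈ 𝒱, ∀ P : IsDedekindDomain.HeightOneSpectrum A,
      v ≠ P.valuation (K := K))
    (s : A) (hs0 : s ≠ 0) (hs : ∀ m : Ideal A, m.IsMaximal → s ∈ m)
    {n : ℕ} (f g : MvPolynomial (Fin n) A) :
    memQ 𝒱 s (f * g) ↔ (memQ 𝒱 s f ∧ memQ 𝒱 s g) := by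
  constructor
  · intro h
    have h' : memQ 𝒱 s (g * f) := by rwa [mul_comm] at h
    exact ⟨memQ_mul_left 𝒱 s hs0 h, memQ_mul_left 𝒱 s hs0 h'⟩
  · rintro ⟨hf, hg⟩
    exact memQ_mul 𝒱 s hs0 hf hg
end

section
/- Let A be a semilocal Dedekind domain with maximal ideals 𝔪₁,…,𝔪ᵣ, s ∈ 𝔪₁⋯𝔪ᵣ nonzero, K the fraction field of A, and 𝒱 a set of normalized discrete valuations on K containing none of the valuations attached to the 𝔪ᵢ. Let n ≥ 2 and let f, g ∈ Qₙ(A,𝒱,s) with top coefficients a, b ∈ A^× and degrees Nᵢ = deg_{tᵢ} f, Mᵢ = deg_{tᵢ} g; set mᵢ := Nᵢ − Mᵢ. For j ∈ {1,…,n}, let f_{j,1} := f(t₁,…,t_{j−1},1,t_{j+1},…,tₙ) and let f_{j,∞} be the leading coefficient of f with respect to tⱼ, i.e., the polynomial in the remaining variables whose coefficients are those of tⱼ^{Nⱼ} in f; define g_{j,1} and g_{j,∞} analogously (using Mⱼ). Suppose that for every pair (j,ε) with ε = ∞ and j ∈ {1,…,n}, or ε = 1 and j ∈ {2,…,n}, there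 exist a unit c ∈ A^× and monomials μ, ν (products of powers of t₁,…,tₙ) such that ν·f_{j,ε} = c·μ·g_{j,ε} in A[t₁,…,tₙ]. Then for every such pair (j,ε) one has the identity b·(∏_{i≠j, mᵢ<0} tᵢ^{−mᵢ})·f_{j,ε} = a·(∏_{i≠j, mᵢ>0} tᵢ^{mᵢ})·g_{j,ε} in A[t₁,…,tₙ] (equivalently f_{j,ε}/g_{j,ε} = (a/b)·∏_{i≠j} tᵢ^{mᵢ} in the fraction field). Furthermore, if in addition there exist monomials μ, ν with ν·f_{1,1} = μ·g_{1,1}, then the same identity also holds for the pair (j,ε) = (1,1). -/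
open MvPolynomial

/-- `f_{j,1}`: the polynomial obtained from `f` by substituting `1` for the variable
`tⱼ`. -/
noncomputable def substOne {A : Type*} [CommRing A] {n : ℕ} (j : Fin n)
    (f : MvPolynomial (Fin n) A) : MvPolynomial (Fin n) A :=
  MvPolynomial.eval₂ (MvPolynomial.C : A →+* MvPolynomial (Fin n) A)
    (fun i => if i = j then 1 else X i) f

/-- `f_{j,∞}`: the leading coefficient of `f` with respect to `tⱼ`, i.e. the polynomial
in the remaining variables whose coefficients are the coefficients of `tⱼ^{Nⱼ}` in `f`
(`Nⱼ = deg_{tⱼ} f`). -/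
noncomputable def lcoeff {A : Type*} [CommRing A] {n : ℕ} (j : Fin n)
    (f : MvPolynomial (Fin n) A) : MvPolynomial (Fin n) A :=
  ∑ d ∈ f.support.filter (fun d => d j = degreeOf j f),
    monomial (Finsupp.update d j 0) (coeff d f)

/-- The face `f_{j,ε}`: for `e = true` (the face `ε = ∞`) the leading coefficient with
respect to `tⱼ`, for `e = false` (the face `ε = 1`, i.e. `1 + 0`) the substitution
`tⱼ = 1`. -/
noncomputable def face {A : Type*} [CommRing A] {n : ℕ} (j : Fin n) (e : Bool)
    (f : MvPolynomial (Fin n) A) : MvPolynomial (Fin n) A :=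
  if e then lcoeff j f else substOne j f


section Helpers

variable {A : Type*} [CommRing A] {n : ℕ}

lemma topDeg_apply_s9 (f : MvPolynomial (Fin n) A) (l : Fin n) :
    topDeg f l = degreeOf l f := rfl

lemma upd_apply (w : Fin n →₀ ℕ) (j l : Fin n) (v : ℕ) :
    (w.update j v) l = if l = j then v else w l := by
  classical
  rw [Finsupp.coe_update]
  exact Function.update_apply _ _ _ _

lemma mem_support_le {f : MvPolynomial (Fin n) A} {d : Fin n →₀ ℕ}
    (hd : d ∈ f.support) (l : Fin n) : d l ≤ degreeOf l f :=
  degreeOf_le_iff.mp le_rfl d hd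

lemma substOne_mul (j : Fin n) (p q : MvPolynomial (Fin n) A) :
    substOne j (p * q) = substOne j p * substOne j q := eval₂_mul _ _

lemma substOne_C (j : Fin n) (c : A) :
    substOne j (C c : MvPolynomial (Fin n) A) = C c := eval₂_C _ _ _

lemma substOne_monomial (j : Fin n) (w : Fin n →₀ ℕ) (c : A) :
    substOne j (monomial w c) = monomial (w.update j 0) c := by
  classical
  simp only [substOne]
  rw [eval₂_monomial, monomial_eq]
  congr 1
  rw [Finsupp.prod, Finsupp.prod, Finsupp.support_update_zero]
  rw [← Finset.prod_erase w.support
    (f := fun i => (if i = j then (1 : MvPolynomial (Fin n) A) else X i) ^ w i)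
    (a := j) (by simp)]
  refine Finset.prod_congr rfl fun i hi => ?_
  rw [Finset.mem_erase] at hi
  rw [if_neg hi.1, upd_apply, if_neg hi.1]

lemma coeff_eq_sum (f : MvPolynomial (Fin n) A) (x : Fin n →₀ ℕ) :
    coeff x f = ∑ d ∈ f.support, if d = x then coeff d f else 0 := by
  classical
  rw [Finset.sum_ite_eq' f.support x (fun d => coeff d f)]
  by_cases h : x ∈ f.support
  · rw [if_pos h]
  · rw [if_neg h]
    exact MvPolynomial.notMem_support_iff.mp h

lemma substOne_eq (j : Fin n) (f : MvPolynomial (Fin n) A) :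
    substOne j f = ∑ d ∈ f.support, monomial (d.update j 0) (coeff d f) := by
  have h : substOne j f = ∑ d ∈ f.support, substOne j (monomial d (coeff d f)) := by
    conv_lhs => rw [f.as_sum]
    exact map_sum (eval₂Hom (C : A →+* MvPolynomial (Fin n) A)
      (fun i => if i = j then 1 else X i)) _ _
  rw [h]
  exact Finset.sum_congr rfl fun d _ => substOne_monomial j d (coeff d f)

lemma coeff_substOne_of_ne (j : Fin n) (f : MvPolynomial (Fin n) A) {e : Fin n →₀ ℕ}
    (he : e j ≠ 0) : coeff e (substOne j f) = 0 := by
  classical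
  rw [substOne_eq, coeff_sum]
  refine Finset.sum_eq_zero fun d _ => ?_
  rw [coeff_monomial, if_neg]
  intro h
  apply he
  rw [← h, upd_apply, if_pos rfl]

lemma coeff_substOne (j : Fin n) (f : MvPolynomial (Fin n) A) {e : Fin n →₀ ℕ}
    (he : e j = 0) {B : ℕ} (hB : degreeOf j f ≤ B) :
    coeff e (substOne j f) = ∑ k ∈ Finset.range (B + 1), coeff (e.update j k) f := by
  classical
  rw [substOne_eq, coeff_sum]
  simp only [coeff_monomial]
  have hR : ∀ k ∈ Finset.range (B + 1), coeff (e.update j k) f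
      = ∑ d ∈ f.support, if d = e.update j k then coeff d f else 0 :=
    fun k _ => coeff_eq_sum f _
  rw [Finset.sum_congr rfl hR, Finset.sum_comm]
  refine Finset.sum_congr rfl fun d hd => ?_
  by_cases hc : d.update j 0 = e
  · rw [if_pos hc]
    have hiff : ∀ k, (d = e.update j k) ↔ k = d j := by
      intro k
      constructor
      · intro h; rw [h, upd_apply, if_pos rfl]
      · rintro rfl
        ext l
        rw [upd_apply]
        by_cases hl : l = j
        · rw [if_pos hl, hl]
        · rw [if_neg hl, ← hc, upd_apply, if_neg hl]
    simp only [hiff]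
    rw [Finset.sum_ite_eq' (Finset.range (B + 1)) (d j) (fun _ => coeff d f)]
    rw [if_pos (Finset.mem_range.mpr (by have := mem_support_le hd j; omega))]
  · rw [if_neg hc]
    refine (Finset.sum_eq_zero fun k _ => ?_).symm
    rw [if_neg]
    intro h
    apply hc
    rw [h]
    ext l
    rw [upd_apply, upd_apply]
    split_ifs with hl
    · subst hl; exact he.symm
    · rfl

lemma coeff_lcoeff (j : Fin n) (f : MvPolynomial (Fin n) A) (e : Fin n →₀ ℕ) :
    coeff e (lcoeff j f) =
      if e j = 0 then coeff (e.update j (degreeOf j f)) f else 0 := by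
  classical
  simp only [_root_.lcoeff]
  rw [coeff_sum]
  simp only [coeff_monomial]
  by_cases he : e j = 0
  · rw [if_pos he]
    have hcong : ∀ d ∈ f.support.filter (fun d => d j = degreeOf j f),
        (if d.update j 0 = e then coeff d f else 0)
          = if d = e.update j (degreeOf j f) then coeff d f else 0 := by
      intro d hd
      rw [Finset.mem_filter] at hd
      congr 1
      apply propext
      constructor
      · intro h
        ext l
        rw [upd_apply]
        by_cases hl : l = j
        · rw [if_pos hl, hl, hd.2]
        · rw [if_neg hl, ← h, upd_apply, if_neg hl]
      · intro h
        rw [h]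
        ext l
        rw [upd_apply, upd_apply]
        split_ifs with hl
        · subst hl; exact he.symm
        · rfl
    rw [Finset.sum_congr rfl hcong,
      Finset.sum_ite_eq' _ (e.update j (degreeOf j f)) (fun d => coeff d f)]
    split_ifs with hmem
    · rfl
    · have hns : e.update j (degreeOf j f) ∉ f.support := fun hsupp =>
        hmem (Finset.mem_filter.mpr ⟨hsupp, by rw [upd_apply, if_pos rfl]⟩)
      exact (MvPolynomial.notMem_support_iff.mp hns).symm
  · rw [if_neg he]
    refine Finset.sum_eq_zero fun d _ => ?_
    rw [if_neg]
    intro h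
    apply he
    rw [← h, upd_apply, if_pos rfl]

lemma support_lcoeff_le (j : Fin n) (f : MvPolynomial (Fin n) A) {d : Fin n →₀ ℕ}
    (hd : d ∈ (lcoeff j f).support) : d ≤ (topDeg f).update j 0 := by
  rw [MvPolynomial.mem_support_iff, coeff_lcoeff] at hd
  by_cases hdj : d j = 0
  · rw [if_pos hdj] at hd
    rw [Finsupp.le_def]
    intro l
    rw [upd_apply]
    split_ifs with hl
    · rw [hl, hdj]
    · have hsup := mem_support_le (MvPolynomial.mem_support_iff.mpr hd) l
      rw [upd_apply, if_neg hl] at hsup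
      rw [topDeg_apply_s9]
      exact hsup
  · rw [if_neg hdj] at hd
    exact absurd rfl hd

lemma support_substOne_le (j : Fin n) (f : MvPolynomial (Fin n) A) {d : Fin n →₀ ℕ}
    (hd : d ∈ (substOne j f).support) : d ≤ (topDeg f).update j 0 := by
  rw [MvPolynomial.mem_support_iff] at hd
  by_cases hdj : d j = 0
  · rw [coeff_substOne j f hdj le_rfl] at hd
    obtain ⟨k, _, hk⟩ := Finset.exists_ne_zero_of_sum_ne_zero hd
    rw [Finsupp.le_def]
    intro l
    rw [upd_apply]
    split_ifs with hl
    · rw [hl, hdj]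
    · have hsup := mem_support_le (MvPolynomial.mem_support_iff.mpr hk) l
      rw [upd_apply, if_neg hl] at hsup
      rw [topDeg_apply_s9]
      exact hsup
  · exact absurd (coeff_substOne_of_ne j f hdj) hd

lemma support_mul_monomial_le {F : MvPolynomial (Fin n) A} {TF : Fin n →₀ ℕ}
    (hFb : ∀ d ∈ F.support, d ≤ TF) {ν d : Fin n →₀ ℕ} {c : A}
    (hd : d ∈ (monomial ν c * F).support) : d ≤ ν + TF := by
  classical
  rw [MvPolynomial.mem_support_iff, coeff_monomial_mul'] at hd
  split_ifs at hd with h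
  · have h2 : d - ν ∈ F.support :=
      MvPolynomial.mem_support_iff.mpr fun hh => hd (by rw [hh, mul_zero])
    have h3 := hFb _ h2
    rw [Finsupp.le_def] at h3 h ⊢
    intro l
    have h4 := h3 l
    rw [Finsupp.tsub_apply] at h4
    have h5 := h l
    rw [Finsupp.add_apply]
    omega
  · exact absurd rfl hd

lemma corner {F G : MvPolynomial (Fin n) A} {TF TG ν μ : Fin n →₀ ℕ} {c₁ c₂ : A}
    (hFb : ∀ d ∈ F.support, d ≤ TF) (hGb : ∀ d ∈ G.support, d ≤ TG)
    (h1 : c₁ * coeff TF F ≠ 0) (h2 : c₂ * coeff TG G ≠ 0)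
    (h : monomial ν c₁ * F = monomial μ c₂ * G) :
    ν + TF = μ + TG ∧ c₁ * coeff TF F = c₂ * coeff TG G := by
  have e1 : coeff (ν + TF) (monomial ν c₁ * F) = c₁ * coeff TF F :=
    coeff_monomial_mul _ _ _ _
  have e2 : coeff (μ + TG) (monomial μ c₂ * G) = c₂ * coeff TG G :=
    coeff_monomial_mul _ _ _ _
  have m1 : ν + TF ∈ (monomial μ c₂ * G).support := by
    rw [← h]
    exact MvPolynomial.mem_support_iff.mpr (by rw [e1]; exact h1)
  have m2 : μ + TG ∈ (monomial ν c₁ * F).support := by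
    rw [h]
    exact MvPolynomial.mem_support_iff.mpr (by rw [e2]; exact h2)
  have heq : ν + TF = μ + TG :=
    le_antisymm (support_mul_monomial_le hGb m1) (support_mul_monomial_le hFb m2)
  exact ⟨heq, by rw [← e1, h, heq, e2]⟩

end Helpers

noncomputable def wneg {n : ℕ} (m : Fin n → ℤ) (j : Fin n) : Fin n →₀ ℕ :=
  ∑ i ∈ Finset.univ.filter (fun i => i ≠ j ∧ m i < 0), Finsupp.single i (-(m i)).toNat

noncomputable def wpos {n : ℕ} (m : Fin n → ℤ) (j : Fin n) : Fin n →₀ ℕ :=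
  ∑ i ∈ Finset.univ.filter (fun i => i ≠ j ∧ 0 < m i), Finsupp.single i (m i).toNat

section Helpers2

variable {A : Type*} [CommRing A] {n : ℕ}

lemma sum_single_apply (S : Finset (Fin n)) (k : Fin n → ℕ) (l : Fin n) :
    (∑ i ∈ S, Finsupp.single i (k i)) l = if l ∈ S then k l else 0 := by
  classical
  rw [Finsupp.finset_sum_apply]
  simp only [Finsupp.single_apply]
  exact Finset.sum_ite_eq' S l k

lemma wneg_apply (m : Fin n → ℤ) (j l : Fin n) :
    wneg m j l = if l ≠ j ∧ m l < 0 then (-(m l)).toNat else 0 := by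
  classical
  rw [wneg, sum_single_apply]
  simp [Finset.mem_filter]

lemma wpos_apply (m : Fin n → ℤ) (j l : Fin n) :
    wpos m j l = if l ≠ j ∧ 0 < m l then (m l).toNat else 0 := by
  classical
  rw [wpos, sum_single_apply]
  simp [Finset.mem_filter]

lemma prod_X_pow_eq (S : Finset (Fin n)) (k : Fin n → ℕ) :
    (∏ i ∈ S, (X i : MvPolynomial (Fin n) A) ^ k i)
      = monomial (∑ i ∈ S, Finsupp.single i (k i)) 1 := by
  classical
  induction S using Finset.induction_on with
  | empty => simp
  | insert _ _ h ih =>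
      rw [Finset.prod_insert h, Finset.sum_insert h, ih, X_pow_eq_monomial, monomial_mul,
        one_mul]

lemma isUnit_add_of_jac {s t a : A} (hs : ∀ m : Ideal A, m.IsMaximal → s ∈ m)
    (ha : IsUnit a) : IsUnit (a + s * t) := by
  have hsj : s ∈ Ideal.jacobson (⊥ : Ideal A) :=
    Ideal.mem_sInf.mpr fun {J} hJ => hs J hJ.2
  obtain ⟨u, rfl⟩ := ha
  have h1 : IsUnit (s * (t * ↑u⁻¹) + 1) := Ideal.mem_jacobson_bot.mp hsj _
  have h2 : ((u : A) + s * t) = (s * (t * ↑u⁻¹) + 1) * ↑u := by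
    have hu : (↑u⁻¹ : A) * ↑u = 1 := u.inv_mul
    calc (u : A) + s * t = s * t * 1 + u := by ring
      _ = s * t * ((↑u⁻¹ : A) * ↑u) + u := by rw [hu]
      _ = (s * (t * ↑u⁻¹) + 1) * ↑u := by ring
  rw [h2]
  exact h1.mul u.isUnit

noncomputable def uCorner (j : Fin n) (f : MvPolynomial (Fin n) A) : A :=
  coeff ((topDeg f).update j 0) (substOne j f)

lemma uCorner_def (j : Fin n) (f : MvPolynomial (Fin n) A) :
    uCorner j f = coeff ((topDeg f).update j 0) (substOne j f) := rfl

lemma uCorner_eq (j : Fin n) (f : MvPolynomial (Fin n) A) :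
    uCorner j f
      = ∑ k ∈ Finset.range (degreeOf j f + 1), coeff ((topDeg f).update j k) f := by
  rw [uCorner_def]
  rw [coeff_substOne j f (by rw [upd_apply, if_pos rfl]) le_rfl]
  exact Finset.sum_congr rfl fun k _ => by rw [Finsupp.update_idem]

lemma uCorner_isUnit {s : A} (hs : ∀ m : Ideal A, m.IsMaximal → s ∈ m)
    (j : Fin n) (f : MvPolynomial (Fin n) A)
    (hQ1 : ∀ d : Fin n →₀ ℕ, s ^ (Finset.univ.sup fun l => degreeOf l f - d l) ∣ coeff d f)
    (ha : IsUnit (coeff (topDeg f) f)) : IsUnit (uCorner j f) := by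
  rw [uCorner_eq, Finset.sum_range_succ]
  rw [show (topDeg f).update j (degreeOf j f) = topDeg f by
    conv_lhs => rw [← topDeg_apply_s9 f j]
    exact Finsupp.update_self _ _]
  have hdvd : s ∣ ∑ k ∈ Finset.range (degreeOf j f), coeff ((topDeg f).update j k) f := by
    refine Finset.dvd_sum fun k hk => ?_
    refine dvd_trans ?_ (hQ1 ((topDeg f).update j k))
    refine dvd_pow_self s ?_
    have hle : degreeOf j f - ((topDeg f).update j k) j
        ≤ Finset.univ.sup fun l => degreeOf l f - ((topDeg f).update j k) l :=
      Finset.le_sup (f := fun l => degreeOf l f - ((topDeg f).update j k) l)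
        (Finset.mem_univ j)
    rw [upd_apply, if_pos rfl] at hle
    rw [Finset.mem_range] at hk
    omega
  obtain ⟨t, ht⟩ := hdvd
  rw [ht, add_comm]
  exact isUnit_add_of_jac hs ha

lemma coeff_substOne_lcoeff (j i : Fin n) (hij : i ≠ j) (f : MvPolynomial (Fin n) A) :
    coeff (((topDeg f).update j 0).update i 0) (substOne j (lcoeff i f)) = uCorner j f := by
  have hB : degreeOf j (lcoeff i f) ≤ degreeOf j f := by
    rw [degreeOf_le_iff]
    intro d hd
    have h1 := Finsupp.le_def.mp (support_lcoeff_le i f hd) j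
    rw [upd_apply, if_neg hij.symm, topDeg_apply_s9] at h1
    exact h1
  have hej : (((topDeg f).update j 0).update i 0) j = 0 := by
    rw [upd_apply, if_neg hij.symm, upd_apply, if_pos rfl]
  rw [coeff_substOne j (lcoeff i f) hej hB, uCorner_eq]
  refine Finset.sum_congr rfl fun k hk => ?_
  rw [coeff_lcoeff]
  have hik : ((((topDeg f).update j 0).update i 0).update j k) i = 0 := by
    rw [upd_apply, if_neg hij, upd_apply, if_pos rfl]
  rw [if_pos hik]
  congr 1
  ext l
  simp only [upd_apply, topDeg_apply_s9]
  split_ifs <;> simp_all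

lemma bridge {m : Fin n → ℤ} {f g : MvPolynomial (Fin n) A} {a b : A}
    (j i : Fin n) (hij : i ≠ j)
    (hm : ∀ l, m l = (degreeOf l f : ℤ) - degreeOf l g)
    (hId : C b * monomial (wneg m i) 1 * lcoeff i f
         = C a * monomial (wpos m i) 1 * lcoeff i g) :
    b * uCorner j f = a * uCorner j g := by
  have H := congrArg (substOne j) hId
  simp only [substOne_mul, substOne_C, substOne_monomial] at H
  rw [C_mul_monomial, mul_one, C_mul_monomial, mul_one] at H
  have hexp : (wneg m i).update j 0 + ((topDeg f).update j 0).update i 0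
      = (wpos m i).update j 0 + ((topDeg g).update j 0).update i 0 := by
    ext l
    simp only [Finsupp.add_apply, upd_apply, wneg_apply, wpos_apply, topDeg_apply_s9]
    have hml := hm l
    by_cases h1 : l = j
    · subst h1; simp
    · by_cases h2 : l = i
      · subst h2; simp [h1]
      · simp only [if_neg h1, if_neg h2]
        by_cases h3 : m l < 0
        · rw [if_pos ⟨h2, h3⟩, if_neg (fun hx : l ≠ i ∧ 0 < m l => by omega)]
          omega
        · rw [if_neg (fun hx : l ≠ i ∧ m l < 0 => h3 hx.2)]
          by_cases h4 : 0 < m l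
          · rw [if_pos ⟨h2, h4⟩]; omega
          · rw [if_neg (fun hx : l ≠ i ∧ 0 < m l => h4 hx.2)]; omega
  have H2 := congrArg
    (coeff ((wneg m i).update j 0 + ((topDeg f).update j 0).update i 0)) H
  rw [coeff_monomial_mul] at H2
  rw [hexp, coeff_monomial_mul] at H2
  rw [coeff_substOne_lcoeff j i hij f, coeff_substOne_lcoeff j i hij g] at H2
  exact H2

lemma keyStep [IsDomain A] (j : Fin n) (m : Fin n → ℤ)
    {F G : MvPolynomial (Fin n) A} {TF TG ν μ : Fin n →₀ ℕ} {a b c α β : A}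
    (hFb : ∀ d ∈ F.support, d ≤ TF) (hGb : ∀ d ∈ G.support, d ≤ TG)
    (hTFj : TF j = 0) (hTGj : TG j = 0)
    (hmTF : ∀ l, l ≠ j → m l = (TF l : ℤ) - TG l)
    (hα : coeff TF F = α) (hβ : coeff TG G = β)
    (hα0 : α ≠ 0) (hβ0 : β ≠ 0) (hc0 : c ≠ 0)
    (hkey : b * α = a * β)
    (h : monomial ν (1 : A) * F = C c * monomial μ 1 * G) :
    C b * monomial (wneg m j) 1 * F = C a * monomial (wpos m j) 1 * G := by
  rw [C_mul_monomial, mul_one] at h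
  have h1' : (1 : A) * coeff TF F ≠ 0 := by rw [one_mul, hα]; exact hα0
  have h2' : c * coeff TG G ≠ 0 := by rw [hβ]; exact mul_ne_zero hc0 hβ0
  obtain ⟨heq, hco⟩ := corner hFb hGb h1' h2' h
  rw [one_mul, hα, hβ] at hco
  have hbc : b * c = a := by
    have hq : (b * c) * β = a * β := by rw [mul_assoc, ← hco, hkey]
    exact mul_right_cancel₀ hβ0 hq
  have happ : ∀ l, ν l + TF l = μ l + TG l := fun l => by
    have hq := DFunLike.congr_fun heq l
    rwa [Finsupp.add_apply, Finsupp.add_apply] at hq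
  have hwν : ∀ l, wneg m j l ≤ ν l := by
    intro l
    rw [wneg_apply]
    split_ifs with hcond
    · have hq1 := happ l
      have hq2 := hmTF l hcond.1
      omega
    · omega
  have hδ_apply : ∀ l, (ν - wneg m j) l = ν l - wneg m j l :=
    fun l => Finsupp.tsub_apply _ _ _
  have hν : ν = (ν - wneg m j) + wneg m j := by
    ext l
    rw [Finsupp.add_apply, hδ_apply l]
    have hq := hwν l
    omega
  have hμ : μ = (ν - wneg m j) + wpos m j := by
    ext l
    rw [Finsupp.add_apply, hδ_apply l]
    have hap := happ l
    by_cases h1 : l = j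
    · subst h1
      rw [wneg_apply, wpos_apply, if_neg (fun hx : l ≠ l ∧ m l < 0 => hx.1 rfl),
        if_neg (fun hx : l ≠ l ∧ 0 < m l => hx.1 rfl)]
      omega
    · have hm' := hmTF l h1
      rw [wneg_apply, wpos_apply]
      by_cases h3 : m l < 0
      · rw [if_pos ⟨h1, h3⟩, if_neg (fun hx : l ≠ j ∧ 0 < m l => by omega)]
        omega
      · rw [if_neg (fun hx : l ≠ j ∧ m l < 0 => h3 hx.2)]
        by_cases h4 : 0 < m l
        · rw [if_pos ⟨h1, h4⟩]; omega
        · rw [if_neg (fun hx : l ≠ j ∧ 0 < m l => h4 hx.2)]; omega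
  have mm1 : (monomial (ν - wneg m j) (1 : A)) * monomial (wneg m j) 1 = monomial ν 1 := by
    rw [monomial_mul, one_mul, ← hν]
  have mm2 : (monomial (ν - wneg m j) (1 : A)) * monomial (wpos m j) 1 = monomial μ 1 := by
    rw [monomial_mul, one_mul, ← hμ]
  have H2 : C b * (monomial ν (1 : A) * F) = C a * (monomial μ (1 : A) * G) := by
    rw [h, ← mul_assoc, ← mul_assoc, C_mul_monomial, C_mul_monomial, mul_one, hbc]
  have H3 : monomial (ν - wneg m j) (1 : A) * (C b * monomial (wneg m j) 1 * F)
      = monomial (ν - wneg m j) 1 * (C a * monomial (wpos m j) 1 * G) := by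
    calc monomial (ν - wneg m j) (1 : A) * (C b * monomial (wneg m j) 1 * F)
        = C b * (monomial (ν - wneg m j) 1 * monomial (wneg m j) 1 * F) := by ring
      _ = C b * (monomial ν 1 * F) := by rw [mm1]
      _ = C a * (monomial μ 1 * G) := H2
      _ = C a * (monomial (ν - wneg m j) 1 * monomial (wpos m j) 1 * G) := by rw [mm2]
      _ = monomial (ν - wneg m j) 1 * (C a * monomial (wpos m j) 1 * G) := by ring
  exact mul_left_cancel₀ (by rw [Ne, monomial_eq_zero]; exact one_ne_zero) H3

end Helpers2
/-- Lemma 5.12.  Let `A` be a semilocal Dedekind domain, `s`, `𝒱` as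
usual, `n ≥ 2`, and `f, g ∈ Qₙ(A,𝒱,s)` with top coefficients `a, b ∈ A^×` and degrees
`Nᵢ = deg_{tᵢ} f`, `Mᵢ = deg_{tᵢ} g`; set `mᵢ = Nᵢ − Mᵢ ∈ ℤ`.  Suppose that for every
pair `(j, ε)` with `ε = ∞`, `j ∈ {1,…,n}`, or `ε = 1`, `j ∈ {2,…,n}`, there are a unit
`c ∈ A^×` and monomials `μ, ν` with `ν·f_{j,ε} = c·μ·g_{j,ε}`.  Then for every such pair
`b·(∏_{i≠j, mᵢ<0} tᵢ^{−mᵢ})·f_{j,ε} = a·(∏_{i≠j, mᵢ>0} tᵢ^{mᵢ})·g_{j,ε}`.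
If moreover there are monomials `μ, ν` with `ν·f_{1,1} = μ·g_{1,1}`, then the same
identity also holds for `(j, ε) = (1, 1)`. -/
theorem stmt_9 {A : Type*} [CommRing A] [IsDedekindDomain A] (hA : ¬ IsField A)
    (hfin : {I : Ideal A | I.IsMaximal}.Finite)
    {K : Type*} [Field K] [Algebra A K] [IsFractionRing A K]
    (𝒱 : Set (Valuation K (WithZero (Multiplicative ℤ))))
    (hnorm : ∀ v ∈ 𝒱, Function.Surjective v)
    (hnot : ∀ v ∈ 𝒱, ∀ P : IsDedekindDomain.HeightOneSpectrum A,
      v ≠ P.valuation (K := K))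
    (s : A) (hs0 : s ≠ 0) (hs : ∀ m : Ideal A, m.IsMaximal → s ∈ m)
    {n : ℕ} (hn : 2 ≤ n)
    (f g : MvPolynomial (Fin n) A) (hf : memQ 𝒱 s f) (hg : memQ 𝒱 s g)
    (a b : A) (ha : a = coeff (topDeg f) f) (hb : b = coeff (topDeg g) g)
    (m : Fin n → ℤ) (hm : ∀ i, m i = (degreeOf i f : ℤ) - (degreeOf i g : ℤ))
    (hβ : ∀ (j : Fin n) (e : Bool), (e = true ∨ (j : ℕ) ≠ 0) →
      ∃ (c : Aˣ) (μ ν : Fin n →₀ ℕ),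
        (monomial ν (1 : A)) * face j e f = C (c : A) * (monomial μ (1 : A)) * face j e g) :
    (∀ (j : Fin n) (e : Bool), (e = true ∨ (j : ℕ) ≠ 0) →
      C b * (∏ i ∈ Finset.univ.filter (fun i => i ≠ j ∧ m i < 0), X i ^ (-(m i)).toNat) *
          face j e f =
        C a * (∏ i ∈ Finset.univ.filter (fun i => i ≠ j ∧ 0 < m i), X i ^ (m i).toNat) *
          face j e g) ∧
    (∀ j : Fin n, (j : ℕ) = 0 →
      (∃ μ ν : Fin n →₀ ℕ,
        (monomial ν (1 : A)) * face j false f = (monomial μ (1 : A)) * face j false g) →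
      C b * (∏ i ∈ Finset.univ.filter (fun i => i ≠ j ∧ m i < 0), X i ^ (-(m i)).toNat) *
          face j false f =
        C a * (∏ i ∈ Finset.univ.filter (fun i => i ≠ j ∧ 0 < m i), X i ^ (m i).toNat) *
          face j false g) := by
  classical
  obtain ⟨hf0, hfQ1, hfQ2, hfQ25, hfQ3⟩ := hf
  obtain ⟨hg0, hgQ1, hgQ2, hgQ25, hgQ3⟩ := hg
  have ha0 : a ≠ 0 := by rw [ha]; exact hfQ2.ne_zero
  have hb0 : b ≠ 0 := by rw [hb]; exact hgQ2.ne_zero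
  have hprodneg : ∀ j : Fin n,
      (∏ i ∈ Finset.univ.filter (fun i => i ≠ j ∧ m i < 0),
        (X i : MvPolynomial (Fin n) A) ^ (-(m i)).toNat) = monomial (wneg m j) 1 :=
    fun j => prod_X_pow_eq _ _
  have hprodpos : ∀ j : Fin n,
      (∏ i ∈ Finset.univ.filter (fun i => i ≠ j ∧ 0 < m i),
        (X i : MvPolynomial (Fin n) A) ^ (m i).toNat) = monomial (wpos m j) 1 :=
    fun j => prod_X_pow_eq _ _
  have hcf : ∀ j : Fin n, coeff ((topDeg f).update j 0) (lcoeff j f) = a := by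
    intro j
    rw [coeff_lcoeff, if_pos (by rw [upd_apply, if_pos rfl]), Finsupp.update_idem]
    rw [show (topDeg f).update j (degreeOf j f) = topDeg f by
      conv_lhs => rw [← topDeg_apply_s9 f j]
      exact Finsupp.update_self _ _]
    exact ha.symm
  have hcg : ∀ j : Fin n, coeff ((topDeg g).update j 0) (lcoeff j g) = b := by
    intro j
    rw [coeff_lcoeff, if_pos (by rw [upd_apply, if_pos rfl]), Finsupp.update_idem]
    rw [show (topDeg g).update j (degreeOf j g) = topDeg g by
      conv_lhs => rw [← topDeg_apply_s9 g j]
      exact Finsupp.update_self _ _]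
    exact hb.symm
  have hTj : ∀ (h : MvPolynomial (Fin n) A) (j : Fin n), ((topDeg h).update j 0) j = 0 :=
    fun h j => by rw [upd_apply, if_pos rfl]
  have hmf : ∀ (j l : Fin n), l ≠ j →
      m l = ((((topDeg f).update j 0) l : ℕ) : ℤ) - (((topDeg g).update j 0) l : ℕ) := by
    intro j l hl
    rw [upd_apply, if_neg hl, upd_apply, if_neg hl, topDeg_apply_s9, topDeg_apply_s9]
    exact hm l
  have hTrue : ∀ j : Fin n,
      C b * monomial (wneg m j) 1 * lcoeff j f
        = C a * monomial (wpos m j) 1 * lcoeff j g := by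
    intro j
    obtain ⟨c, μ, ν, hcβ⟩ := hβ j true (Or.inl rfl)
    rw [show face j true f = lcoeff j f from rfl,
      show face j true g = lcoeff j g from rfl] at hcβ
    exact keyStep j m (fun d hd => support_lcoeff_le j f hd)
      (fun d hd => support_lcoeff_le j g hd) (hTj f j) (hTj g j) (hmf j)
      (hcf j) (hcg j) ha0 hb0 c.ne_zero (mul_comm b a) hcβ
  have hFalse : ∀ (j : Fin n) (c : A), c ≠ 0 →
      (∃ μ ν : Fin n →₀ ℕ,
        monomial ν (1 : A) * substOne j f = C c * monomial μ 1 * substOne j g) →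
      C b * monomial (wneg m j) 1 * substOne j f
        = C a * monomial (wpos m j) 1 * substOne j g := by
    rintro j c hc0 ⟨μ, ν, hcβ⟩
    obtain ⟨i, hij⟩ : ∃ i : Fin n, i ≠ j := by
      rcases eq_or_ne (j : ℕ) 0 with hj | hj
      · exact ⟨⟨1, by omega⟩, fun hx => by rw [← hx] at hj; simp at hj⟩
      · exact ⟨⟨0, by omega⟩, fun hx => by rw [← hx] at hj; exact hj rfl⟩
    have hbr : b * uCorner j f = a * uCorner j g := bridge j i hij hm (hTrue i)
    have huf : IsUnit (uCorner j f) := uCorner_isUnit hs j f hfQ1 hfQ2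
    have hug : IsUnit (uCorner j g) := uCorner_isUnit hs j g hgQ1 hgQ2
    exact keyStep j m (fun d hd => support_substOne_le j f hd)
      (fun d hd => support_substOne_le j g hd) (hTj f j) (hTj g j) (hmf j)
      (uCorner_def j f).symm (uCorner_def j g).symm huf.ne_zero hug.ne_zero hc0 hbr hcβ
  constructor
  · intro j e he
    cases e with
    | false =>
        rcases he with he | hj
        · exact absurd he (by simp)
        · obtain ⟨c, μ, ν, hcβ⟩ := hβ j false (Or.inr hj)
          rw [show face j false f = substOne j f from rfl,
            show face j false g = substOne j g from rfl] at hcβ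
          rw [show face j false f = substOne j f from rfl,
            show face j false g = substOne j g from rfl, hprodneg j, hprodpos j]
          exact hFalse j (c : A) c.ne_zero ⟨μ, ν, hcβ⟩
    | true =>
        rw [show face j true f = lcoeff j f from rfl,
          show face j true g = lcoeff j g from rfl, hprodneg j, hprodpos j]
        exact hTrue j
  · intro j hj hex
    obtain ⟨μ, ν, hid⟩ := hex
    rw [show face j false f = substOne j f from rfl,
      show face j false g = substOne j g from rfl] at hid
    rw [show face j false f = substOne j f from rfl,
      show face j false g = substOne j g from rfl, hprodneg j, hprodpos j]
    refine hFalse j 1 one_ne_zero ⟨μ, ν, ?_⟩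
    rw [MvPolynomial.C_1, one_mul]
    exact hid
end
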